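/- arXiv:2104.12514 — 11 statements merged into one kernel-verified Lean document; each statement's English description precedes it below -/
import Mathlib

section
/- For every integer a, the polynomial f_a(X) = X^3 - a·X^2 - (a+3)·X - 1 is irreducible over ℚ. -/
open Polynomial

/-- For every integer `a`, the polynomial `f_a(X) = X^3 - a*X^2 - (a+3)*X - 1`
is irreducible over `ℚ`. -/
theorem simplest_cubic_irreducible (a : ℤ) :
    Irreducible (X ^ 3 - C (a : ℚ) * X ^ 2 - C ((a : ℚ) + 3) * X - 1 : ℚ[X]) := by
  set p : ℚ[X] := X ^ 3 - C (a : ℚ) * X ^ 2 - C ((a : ℚ) + 3) * X - 1 with hp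
  have hmonic : p.Monic := by
    rw [hp]; monicity!
  have hdeg : p.natDegree = 3 := by
    rw [hp]
    compute_degree!
  rw [hmonic.irreducible_iff_roots_eq_zero_of_degree_le_three (by omega) (by omega)]
  rw [Multiset.eq_zero_iff_forall_notMem]
  intro x hx
  rw [mem_roots hmonic.ne_zero, IsRoot.def] at hx
  -- x is a rational root; transfer to integer polynomial
  set q : ℤ[X] := X ^ 3 - C a * X ^ 2 - C (a + 3) * X - 1 with hq
  have hqmonic : q.Monic := by
    rw [hq]; monicity!
  have haev : aeval x q = 0 := by
    rw [hq]
    simp only [map_sub, map_mul, map_pow, aeval_X, aeval_C, map_one]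
    push_cast
    rw [hp] at hx
    simpa using hx
  obtain ⟨n, hn⟩ := isInteger_of_is_root_of_monic hqmonic haev
  have hn' : (n : ℚ) = x := by simpa using hn
  have heq : (n : ℚ) ^ 3 - (a : ℚ) * n ^ 2 - ((a : ℚ) + 3) * n - 1 = 0 := by
    rw [hn']
    rw [hp] at hx
    simpa using hx
  have heqz : n ^ 3 - a * n ^ 2 - (a + 3) * n - 1 = 0 := by
    exact_mod_cast heq
  have hdvd : n ∣ 1 := ⟨n ^ 2 - a * n - (a + 3), by linarith [heqz]⟩
  rcases Int.isUnit_iff.mp (isUnit_of_dvd_one hdvd) with h1 | h1 <;> subst h1 <;> omega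
end

section
/- For every integer a, the discriminant of the polynomial f_a(X) = X^3 - a·X^2 - (a+3)·X - 1 equals (a^2 + 3a + 9)^2; in particular the discriminant is a nonzero perfect square. -/
open Polynomial

/-- For every integer `a`, the discriminant of `f_a(X) = X^3 - a*X^2 - (a+3)*X - 1`,
computed as `((r₁-r₂)(r₁-r₃)(r₂-r₃))^2` for the complex roots `r₁, r₂, r₃`, equals
`(a^2 + 3a + 9)^2`; in particular it is a nonzero perfect square. -/
theorem simplest_cubic_discriminant (a : ℤ) :
    (∃ r₁ r₂ r₃ : ℂ, ∀ z : ℂ,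
        z ^ 3 - (a : ℂ) * z ^ 2 - ((a : ℂ) + 3) * z - 1 = (z - r₁) * (z - r₂) * (z - r₃)) ∧
    (∀ r₁ r₂ r₃ : ℂ,
        (∀ z : ℂ, z ^ 3 - (a : ℂ) * z ^ 2 - ((a : ℂ) + 3) * z - 1
          = (z - r₁) * (z - r₂) * (z - r₃)) →
        ((r₁ - r₂) * (r₁ - r₃) * (r₂ - r₃)) ^ 2 = ((a : ℂ) ^ 2 + 3 * (a : ℂ) + 9) ^ 2) ∧
    ((a ^ 2 + 3 * a + 9) ^ 2 ≠ 0 ∧ IsSquare ((a ^ 2 + 3 * a + 9) ^ 2)) := by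
  refine ⟨?_, ?_, ?_, ?_⟩
  · -- existence of the factorization
    have hdeg : (X ^ 3 - C (a : ℂ) * X ^ 2 - C ((a : ℂ) + 3) * X - C 1 : ℂ[X]).degree = 3 := by
      compute_degree!
    obtain ⟨r₁, hr₁⟩ := Complex.exists_root (f := X ^ 3 - C (a : ℂ) * X ^ 2
        - C ((a : ℂ) + 3) * X - C 1) (by rw [hdeg]; norm_num)
    have hr₁' : r₁ ^ 3 - (a : ℂ) * r₁ ^ 2 - ((a : ℂ) + 3) * r₁ - 1 = 0 := by
      simpa [IsRoot] using hr₁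
    obtain ⟨s, hs⟩ := IsAlgClosed.exists_pow_nat_eq
      ((r₁ - (a : ℂ)) ^ 2 - 4 * (r₁ ^ 2 - (a : ℂ) * r₁ - (a : ℂ) - 3)) (n := 2) (by norm_num)
    refine ⟨r₁, (((a : ℂ) - r₁) + s) / 2, (((a : ℂ) - r₁) - s) / 2, fun z => ?_⟩
    linear_combination hr₁' + (z - r₁) / 4 * hs
  · -- the discriminant computation
    intro r₁ r₂ r₃ h
    have h3 : r₁ * r₂ * r₃ = 1 := by linear_combination h 0
    have h1 : r₁ + r₂ + r₃ = (a : ℂ) := by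
      linear_combination (h 1) / 2 + (h (-1)) / 2 - h 0
    have h2 : r₁ * r₂ + r₁ * r₃ + r₂ * r₃ = -((a : ℂ) + 3) := by
      linear_combination (h (-1)) / 2 - (h 1) / 2
    set e1 := r₁ + r₂ + r₃ with he1
    set e2 := r₁ * r₂ + r₁ * r₃ + r₂ * r₃ with he2
    set e3 := r₁ * r₂ * r₃ with he3
    have A := e1 ^ 2 * (e2 - e1 - 3) - 4 * (e2 ^ 2 - e2 * (e1 + 3) + (e1 + 3) ^ 2)
      + 18 * e1 * e3
    linear_combination (e1 ^ 2 * (e2 - e1 - 3) - 4 * (e2 ^ 2 - e2 * (e1 + 3) + (e1 + 3) ^ 2)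
        + 18 * e1 * e3) * h2
      + (-4 * e1 ^ 3 - 18 * e1 * (e1 + 3) - 27 * (e3 + 1)) * h3
      + (e1 ^ 2 * (e2 - e1 - 3) - 4 * (e2 ^ 2 - e2 * (e1 + 3) + (e1 + 3) ^ 2) + 18 * e1 * e3
        + (e1 + (a : ℂ) + 3) * ((e1 ^ 2 + 3 * e1 + 9) + ((a : ℂ) ^ 2 + 3 * (a : ℂ) + 9))) * h1
  · -- nonzero
    have : 0 < a ^ 2 + 3 * a + 9 := by nlinarith [sq_nonneg (2 * a + 3)]
    positivity
  · exact ⟨a ^ 2 + 3 * a + 9, sq (a ^ 2 + 3 * a + 9)⟩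
end

section
/- For every integer a, every complex root ρ of f_a is nonzero, and if ρ is a root of f_a then so is -1 - 1/ρ; moreover the three complex roots of f_a are exactly ρ, -1 - 1/ρ and -1/(1+ρ), and these are pairwise distinct. -/
/-- For every integer `a`, every complex root `ρ` of `f_a` is nonzero; if `ρ` is a root
then so is `-1 - 1/ρ`; the three complex roots of `f_a` are exactly `ρ`, `-1 - 1/ρ` and
`-1/(1+ρ)`, and these are pairwise distinct. -/
theorem simplest_cubic_roots (a : ℤ) (ρ : ℂ)
    (hρ : ρ ^ 3 - (a : ℂ) * ρ ^ 2 - ((a : ℂ) + 3) * ρ - 1 = 0) :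
    ρ ≠ 0 ∧
    ((-1 - 1/ρ) ^ 3 - (a : ℂ) * (-1 - 1/ρ) ^ 2 - ((a : ℂ) + 3) * (-1 - 1/ρ) - 1 = 0) ∧
    (∀ z : ℂ, z ^ 3 - (a : ℂ) * z ^ 2 - ((a : ℂ) + 3) * z - 1 = 0 ↔
      z = ρ ∨ z = -1 - 1/ρ ∨ z = -1/(1 + ρ)) ∧
    (ρ ≠ -1 - 1/ρ ∧ ρ ≠ -1/(1 + ρ) ∧ (-1 - 1/ρ : ℂ) ≠ -1/(1 + ρ)) := by
  have h0 : ρ ≠ 0 := by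
    rintro rfl
    simp at hρ
  have h1 : (1 : ℂ) + ρ ≠ 0 := by
    intro h
    have hρ1 : ρ = -1 := by linear_combination h
    rw [hρ1] at hρ
    have : (1 : ℂ) = 0 := by linear_combination hρ
    exact one_ne_zero this
  have hkey : ρ ^ 2 + ρ + 1 ≠ 0 := by
    intro h
    have ha : (a : ℂ) = 3 * ρ := by linear_combination hρ - (ρ - 1 - a) * h
    have habs : ((a ^ 2 + 3 * a + 9 : ℤ) : ℂ) = 0 := by
      push_cast
      rw [ha]; linear_combination 9 * h
    have h5 : a ^ 2 + 3 * a + 9 = 0 := by exact_mod_cast habs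
    nlinarith [sq_nonneg (2 * a + 3)]
  have factor : ∀ z : ℂ, z ^ 3 - (a : ℂ) * z ^ 2 - ((a : ℂ) + 3) * z - 1 =
      (z - ρ) * (z - (-1 - 1/ρ)) * (z - (-1/(1 + ρ))) := by
    intro z
    field_simp
    ring_nf
    linear_combination (z ^ 2 + z) * hρ
  refine ⟨h0, ?_, ?_, ?_, ?_, ?_⟩
  · have h := factor (-1 - 1/ρ)
    rw [h]; ring
  · intro z
    rw [factor z]
    constructor
    · intro h
      rcases mul_eq_zero.mp h with h | h
      · rcases mul_eq_zero.mp h with h | h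
        · exact Or.inl (by linear_combination h)
        · exact Or.inr (Or.inl (by linear_combination h))
      · exact Or.inr (Or.inr (by linear_combination h))
    · rintro (rfl | rfl | rfl) <;> ring
  · intro h
    apply hkey
    field_simp at h
    linear_combination h
  · intro h
    apply hkey
    field_simp at h
    linear_combination h
  · intro h
    apply hkey
    field_simp at h
    linear_combination -h
end

section
/- Let a be an integer and ρ a complex root of f_a. Then -1 - 1/ρ = -ρ^2 + a·ρ + (a+2). In particular all roots of f_a lie in ℤ[ρ], and ℤ[ρ] = ℤ[-1 - 1/ρ]. -/
/-- Let `a` be an integer and `ρ` a complex root of `f_a`. Then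
`-1 - 1/ρ = -ρ^2 + a·ρ + (a+2)`; in particular all roots of `f_a` lie in `ℤ[ρ]`, and
`ℤ[ρ] = ℤ[-1 - 1/ρ]`. -/
theorem simplest_cubic_conjugate_in_Zrho (a : ℤ) (ρ : ℂ)
    (hρ : ρ ^ 3 - (a : ℂ) * ρ ^ 2 - ((a : ℂ) + 3) * ρ - 1 = 0) :
    -1 - 1/ρ = -ρ ^ 2 + (a : ℂ) * ρ + ((a : ℂ) + 2) ∧
    (∀ z : ℂ, z ^ 3 - (a : ℂ) * z ^ 2 - ((a : ℂ) + 3) * z - 1 = 0 →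
      z ∈ Algebra.adjoin ℤ ({ρ} : Set ℂ)) ∧
    Algebra.adjoin ℤ ({ρ} : Set ℂ) = Algebra.adjoin ℤ ({-1 - 1/ρ} : Set ℂ) := by
  have hρ0 : ρ ≠ 0 := by
    rintro rfl
    simp at hρ
  -- Part 1: the conjugate identity
  have h1 : -1 - 1/ρ = -ρ ^ 2 + (a : ℂ) * ρ + ((a : ℂ) + 2) := by
    field_simp
    linear_combination hρ
  -- Membership helpers
  set S := Algebra.adjoin ℤ ({ρ} : Set ℂ) with hS
  have hρS : ρ ∈ S := Algebra.subset_adjoin rfl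
  have haS : ∀ n : ℤ, ((n : ℂ)) ∈ S := fun n => by
    have := Subalgebra.algebraMap_mem S n
    simpa using this
  have hpoly : ∀ (x : ℂ), x ∈ S → ∀ b c d : ℤ,
      (b : ℂ) * x ^ 2 + (c : ℂ) * x + (d : ℂ) ∈ S := by
    intro x hx b c d
    exact S.add_mem (S.add_mem (S.mul_mem (haS b) (S.pow_mem hx 2))
      (S.mul_mem (haS c) hx)) (haS d)
  have hσS : -ρ ^ 2 + (a : ℂ) * ρ + ((a : ℂ) + 2) ∈ S := by
    have := hpoly ρ hρS (-1) a (a + 2)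
    push_cast at this
    convert this using 1
    ring
  have hτS : ρ ^ 2 - ((a : ℂ) + 1) * ρ - 2 ∈ S := by
    have := hpoly ρ hρS 1 (-(a + 1)) (-2)
    push_cast at this
    convert this using 1
    ring
  refine ⟨h1, ?_, ?_⟩
  · -- Part 2: all roots lie in ℤ[ρ]
    intro z hz
    have hfac : (z - ρ) * (z - (-ρ ^ 2 + (a : ℂ) * ρ + ((a : ℂ) + 2))) *
        (z - (ρ ^ 2 - ((a : ℂ) + 1) * ρ - 2)) = 0 := by
      linear_combination hz - (-ρ ^ 2 + z * ρ + (a : ℂ) * ρ + ρ - z * (a : ℂ) - z + 1) * hρ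
    rcases mul_eq_zero.mp hfac with h | h
    · rcases mul_eq_zero.mp h with h | h
      · exact (sub_eq_zero.mp h) ▸ hρS
      · have : z = -ρ ^ 2 + (a : ℂ) * ρ + ((a : ℂ) + 2) := sub_eq_zero.mp h
        exact this ▸ hσS
    · have : z = ρ ^ 2 - ((a : ℂ) + 1) * ρ - 2 := sub_eq_zero.mp h
      exact this ▸ hτS
  · -- Part 3: equality of adjoins
    apply le_antisymm
    · apply Algebra.adjoin_le
      rw [Set.singleton_subset_iff]
      -- need ρ ∈ adjoin ℤ {σ}
      set σ : ℂ := -1 - 1/ρ with hσdef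
      set T := Algebra.adjoin ℤ ({σ} : Set ℂ) with hT
      have hσT : σ ∈ T := Algebra.subset_adjoin rfl
      have haT : ∀ n : ℤ, ((n : ℂ)) ∈ T := fun n => by
        have := Subalgebra.algebraMap_mem T n
        simpa using this
      have hρval : ρ = σ ^ 2 - ((a : ℂ) + 1) * σ - 2 := by
        rw [hσdef]
        field_simp
        ring_nf
        linear_combination hρ
      have hmem : σ ^ 2 - ((a : ℂ) + 1) * σ - 2 ∈ T := by
        have h2 : σ ^ 2 + ((-(a + 1) : ℤ) : ℂ) * σ + ((-2 : ℤ) : ℂ) ∈ T :=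
          T.add_mem (T.add_mem (T.pow_mem hσT 2)
            (T.mul_mem (haT (-(a + 1))) hσT)) (haT (-2))
        push_cast at h2
        convert h2 using 1
        ring
      exact SetLike.mem_coe.mpr (hρval ▸ hmem)
    · apply Algebra.adjoin_le
      rw [Set.singleton_subset_iff]
      exact SetLike.mem_coe.mpr (h1 ▸ hσS)
end

section
/- For every integer a and every root ρ of f_a, the field K_a = ℚ(ρ) is a degree 3 extension of ℚ which is Galois, and its Galois group Gal(K_a/ℚ) is cyclic of order 3, generated by the automorphism σ determined by σ(ρ) = -1 - 1/ρ. -/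
open IntermediateField

open Polynomial in
set_option maxHeartbeats 2000000 in
set_option synthInstance.maxHeartbeats 400000 in
/-- For every integer `a` and every complex root `ρ` of `f_a`, the field `K_a = ℚ(ρ)` is a
degree 3 Galois extension of `ℚ`, and `Gal(K_a/ℚ)` is cyclic of order 3, generated by the
automorphism `σ` determined by `σ(ρ) = -1 - 1/ρ`. -/
theorem simplest_cubic_galois (a : ℤ) (ρ : ℂ)
    (hρ : ρ ^ 3 - (a : ℂ) * ρ ^ 2 - ((a : ℂ) + 3) * ρ - 1 = 0) :
    Module.finrank ℚ ℚ⟮ρ⟯ = 3 ∧ IsGalois ℚ ℚ⟮ρ⟯ ∧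
    Nat.card (ℚ⟮ρ⟯ ≃ₐ[ℚ] ℚ⟮ρ⟯) = 3 ∧
    ∃ σ : ℚ⟮ρ⟯ ≃ₐ[ℚ] ℚ⟮ρ⟯,
      σ (AdjoinSimple.gen ℚ ρ) = -1 - (AdjoinSimple.gen ℚ ρ)⁻¹ ∧
      orderOf σ = 3 ∧
      ∀ τ : ℚ⟮ρ⟯ ≃ₐ[ℚ] ℚ⟮ρ⟯, τ ∈ Subgroup.zpowers σ := by
  have hirr : Irreducible (X^3 - C (a:ℚ) * X^2 - C ((a:ℚ)+3) * X - 1 : ℚ[X]) := by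
    set q : ℚ[X] := X^3 - C (a:ℚ) * X^2 - C ((a:ℚ)+3) * X - 1 with hq
    have hdeg : q.natDegree = 3 := by rw [hq]; compute_degree!
    rw [irreducible_iff_roots_eq_zero_of_degree_le_three (by omega) (by omega)]
    rw [Multiset.eq_zero_iff_forall_notMem]
    intro r hr
    have hq0 : q ≠ 0 := fun h => by simp [h] at hdeg
    rw [mem_roots hq0, IsRoot] at hr
    simp only [hq, eval_sub, eval_mul, eval_pow, eval_X, eval_C, eval_one] at hr
    -- r is an integer root
    have hint : IsLocalization.IsInteger ℤ r := by
      apply isInteger_of_is_root_of_monic (p := (X^3 - C a * X^2 - C (a+3) * X - 1 : ℤ[X]))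
      · monicity!
      · simp only [map_sub, map_mul, map_pow, aeval_X, aeval_C, map_one, algebraMap_int_eq, eq_intCast, map_intCast]
        push_cast
        linear_combination hr
    obtain ⟨n, hn⟩ := hint
    rw [algebraMap_int_eq, eq_intCast] at hn; rw [← hn] at hr
    have : (n:ℚ)^3 - a*n^2 - (a+3)*n - 1 = 0 := by push_cast at hr ⊢; linear_combination hr
    have hz : n^3 - a*n^2 - (a+3)*n - 1 = 0 := by exact_mod_cast this
    have hdvd : n ∣ 1 := ⟨n^2 - a*n - (a+3), by linarith [hz]⟩
    rcases Int.isUnit_iff.mp (isUnit_of_dvd_one hdvd) with h | h <;> subst h <;> omega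
  set q : ℚ[X] := X^3 - C (a:ℚ) * X^2 - C ((a:ℚ)+3) * X - 1 with hq
  have hmon : q.Monic := by rw [hq]; monicity!
  have hdeg : q.natDegree = 3 := by rw [hq]; compute_degree!
  have haev : (aeval ρ) q = 0 := by
    simp only [hq, map_sub, map_mul, map_pow, aeval_X, aeval_C, map_one,
      map_intCast, map_ofNat, map_add]
    push_cast
    linear_combination hρ
  have hint : IsIntegral ℚ ρ := ⟨q, hmon, haev⟩
  have hmin : minpoly ℚ ρ = q := (minpoly.eq_of_irreducible_of_monic hirr haev hmon).symm
  have hfr : Module.finrank ℚ ℚ⟮ρ⟯ = 3 := by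
    rw [IntermediateField.adjoin.finrank hint, hmin, hdeg]
  -- basic facts about ρ
  have hρ0 : ρ ≠ 0 := by rintro rfl; simp at hρ
  have hρ1 : ρ + 1 ≠ 0 := by
    intro h
    have : ρ = -1 := by linear_combination h
    rw [this] at hρ
    have : (1:ℂ) = 0 := by linear_combination hρ
    norm_num at this
  -- move to K
  set K := ℚ⟮ρ⟯
  set g : K := AdjoinSimple.gen ℚ ρ with hgdef
  have hmapg : algebraMap K ℂ g = ρ := AdjoinSimple.algebraMap_gen ℚ ρ
  have hinj : Function.Injective (algebraMap K ℂ) := (algebraMap K ℂ).injective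
  have hgK : g ^ 3 - (a : K) * g ^ 2 - ((a : K) + 3) * g - 1 = 0 := by
    apply hinj
    push_cast [map_sub, map_mul, map_pow, map_one, map_add, map_ofNat, map_intCast, hmapg, map_zero]
    linear_combination hρ
  have hg0 : g ≠ 0 := by
    intro h; apply hρ0; rw [← hmapg, h, map_zero]
  have hg1 : g + 1 ≠ 0 := by
    intro h; apply hρ1
    have := congrArg (algebraMap K ℂ) h
    rwa [map_add, map_one, map_zero, hmapg] at this
  set x2 : K := -1 - g⁻¹ with hx2
  set x3 : K := -1 - x2⁻¹ with hx3
  clear_value x2 x3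
  have hx2' : x2 = -(g+1)/g := by rw [hx2]; field_simp; ring
  have hx20 : x2 ≠ 0 := by
    rw [hx2']; intro h
    rw [_root_.div_eq_zero_iff] at h
    rcases h with h | h
    · exact hg1 (by linear_combination -h)
    · exact hg0 h
  have hx3' : x3 = -1/(g+1) := by
    have hx2inv : x2⁻¹ = -g/(g+1) := by
      rw [hx2', neg_div, inv_neg, inv_div]; ring
    rw [hx3, hx2inv]; field_simp; ring
  have hx30 : x3 ≠ 0 := by rw [hx3']; simp [hg1]
  -- Vieta
  have hs1 : g + x2 + x3 = (a:K) := by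
    rw [hx2', hx3']; field_simp; linear_combination hgK
  have hs2 : g*x2 + g*x3 + x2*x3 = -((a:K)+3) := by
    rw [hx2', hx3']; field_simp; linear_combination -hgK
  have hs3 : g*x2*x3 = 1 := by
    rw [hx2', hx3']; field_simp
  -- splitting
  have hmap : q.map (algebraMap ℚ K) = (X - C g) * (X - C x2) * (X - C x3) := by
    have expand : (X - C g) * (X - C x2) * (X - C x3)
        = X^3 - C (g + x2 + x3) * X^2 + C (g*x2 + g*x3 + x2*x3) * X - C (g*x2*x3) := by
      simp only [map_add, map_mul]; ring
    rw [expand, hs1, hs2, hs3]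
    simp only [hq, Polynomial.map_sub, Polynomial.map_mul, Polynomial.map_pow,
      Polynomial.map_X, Polynomial.map_C, Polynomial.map_one, Polynomial.map_add,
      Polynomial.map_intCast, Polynomial.map_ofNat, map_intCast, map_add,
      map_neg, map_ofNat, map_one, C_1]
    push_cast
    ring
  have hsplit : (q.map (algebraMap ℚ K)).Splits := by
    rw [Polynomial.splits_iff_exists_multiset]
    refine ⟨{g, x2, x3}, ?_⟩
    rw [(hmon.map (algebraMap ℚ K)).leadingCoeff, hmap]
    simp only [map_one, one_mul, Multiset.map_cons, Multiset.map_singleton,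
      Multiset.prod_cons, Multiset.prod_singleton, Multiset.insert_eq_cons]
    ring
  have hsep : IsSeparable ℚ ρ := by
    have : Irreducible (minpoly ℚ ρ) := hmin ▸ hirr
    exact this.separable
  have hfd : FiniteDimensional ℚ K := IntermediateField.adjoin.finiteDimensional hint
  letI : Fintype (K →ₐ[ℚ] K) := IntermediateField.fintypeOfAlgHomAdjoinIntegral ℚ hint
  have hcard : Fintype.card (K ≃ₐ[ℚ] K) = 3 := by
    rw [Fintype.card_congr (algEquivEquivAlgHom ℚ K).toEquiv]
    rw [← Nat.card_eq_fintype_card]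
    refine (IntermediateField.card_algHom_adjoin_integral ℚ hint hsep (hmin ▸ hsplit : ((minpoly ℚ ρ).map (algebraMap ℚ K)).Splits)).trans ?_
    rw [hmin, hdeg]
  have hgal : IsGalois ℚ K := IsGalois.of_card_aut_eq_finrank ℚ K (by rw [Nat.card_eq_fintype_card, hcard, hfr])
  -- construct σ
  set PB := IntermediateField.adjoin.powerBasis hint with hPB
  have hPBgen : PB.gen = g := IntermediateField.adjoin.powerBasis_gen hint
  have haevx2 : aeval x2 (minpoly ℚ PB.gen) = 0 := by
    rw [show minpoly ℚ PB.gen = q by rw [hPBgen, hgdef]; exact (IntermediateField.minpoly_gen (F := ℚ) (α := ρ)).trans hmin]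
    have : aeval x2 q = Polynomial.eval x2 (q.map (algebraMap ℚ K)) := by
      rw [aeval_def, Polynomial.eval_map]
    rw [this, hmap]
    simp
  set φ : K →ₐ[ℚ] K := PB.lift x2 haevx2 with hφ
  set σ : K ≃ₐ[ℚ] K := AlgEquiv.ofBijective φ φ.bijective with hσ
  have hσg : σ g = x2 := by
    have : φ PB.gen = x2 := PB.lift_gen x2 haevx2
    rw [hPBgen] at this
    exact this
  -- σ ≠ 1
  have hσne : σ ≠ 1 := by
    intro h
    have hgg : x2 = g := by rw [← hσg, h]; rfl
    have h' : -1 - ρ⁻¹ = ρ := by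
      have := congrArg (algebraMap K ℂ) hgg
      rwa [hx2, map_sub, map_neg, map_one, map_inv₀, hmapg] at this
    have hω : ρ^2 + ρ + 1 = 0 := by
      field_simp at h'
      linear_combination -h'
    have hA : (a:ℂ) - 3*ρ = 0 := by
      linear_combination hρ - (ρ - (a:ℂ) - 1) * hω
    have hZ : ((a^2 + 3*a + 9 : ℤ) : ℂ) = 0 := by
      push_cast
      linear_combination 9*hω + (3*ρ + (a:ℂ) + 3) * hA
    have haz : a^2 + 3*a + 9 = 0 := by exact_mod_cast hZ
    nlinarith [sq_nonneg (2*a+3)]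
  -- σ^3 = 1
  have hσx2 : σ x2 = x3 := by
    rw [hx2, hx3, map_sub, map_neg, map_one, map_inv₀, hσg]
  have hσx3 : σ x3 = g := by
    rw [hx3, map_sub, map_neg, map_one, map_inv₀, hσx2, hx3']
    field_simp; ring
  have hσ3 : σ ^ 3 = 1 := by
    have hext : (σ^3 : K ≃ₐ[ℚ] K).toAlgHom = (1 : K ≃ₐ[ℚ] K).toAlgHom := by
      apply PB.algHom_ext
      rw [hPBgen]
      show (σ^3) g = (1 : K ≃ₐ[ℚ] K) g
      have : (σ^3) g = σ (σ (σ g)) := by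
        rw [pow_succ, pow_succ, pow_one]; rfl
      rw [this, hσg, hσx2, hσx3]; rfl
    exact AlgEquiv.coe_algHom_injective hext
  haveI : Fact (Nat.Prime 3) := ⟨by norm_num⟩
  have hord : orderOf σ = 3 := orderOf_eq_prime hσ3 hσne
  have hzp : Subgroup.zpowers σ = ⊤ := by
    apply Subgroup.eq_top_of_card_eq
    rw [Nat.card_zpowers, hord, Nat.card_eq_fintype_card, hcard]
  refine ⟨hfr, hgal, ?_, σ, ?_, hord, fun τ => hzp ▸ Subgroup.mem_top τ⟩
  · rw [Nat.card_eq_fintype_card]; exact hcard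
  · rw [hσg, hx2]
end

section
/- Let a > 100 be an integer. Then f_a(X) = X^3 - a·X^2 - (a+3)·X - 1 has three distinct real roots ρ₁, ρ₂, ρ₃, which can be labelled so that ρ₂ = -1 - 1/ρ₁, ρ₃ = -1 - 1/ρ₂, and they satisfy the estimates a+1 < ρ₁ < a+2, -1 - 1/(a+1) < ρ₂ < -1 - 1/(a+2), and -1/(a+2) < ρ₃ < -1/(a+3). -/
private lemma cubic_next_root (A x : ℝ) (hx : x ≠ 0)
    (hroot : x ^ 3 - A * x ^ 2 - (A + 3) * x - 1 = 0) :
    (-1 - 1/x) ^ 3 - A * (-1 - 1/x) ^ 2 - (A + 3) * (-1 - 1/x) - 1 = 0 := by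
  have key : ((-1 - 1/x) ^ 3 - A * (-1 - 1/x) ^ 2 - (A + 3) * (-1 - 1/x) - 1) * x ^ 3
      = (x ^ 3 - A * x ^ 2 - (A + 3) * x - 1) := by
    field_simp
    ring
  have h3 : x ^ 3 ≠ 0 := pow_ne_zero _ hx
  have h0 : ((-1 - 1/x) ^ 3 - A * (-1 - 1/x) ^ 2 - (A + 3) * (-1 - 1/x) - 1) * x ^ 3 = 0 := by
    rw [key, hroot]
  exact (mul_eq_zero.mp h0).resolve_right h3

private lemma double_transform (x : ℝ) (hx : 0 < x) :
    -1 - 1/(-1 - 1/x) = -1/(x+1) := by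
  have h1 : x ≠ 0 := ne_of_gt hx
  have h2 : x + 1 ≠ 0 := by positivity
  have h3 : -1 - x ≠ 0 := by intro h; nlinarith
  field_simp
  linear_combination x * mul_inv_cancel₀ h3

/-- Let `a > 100` be an integer. Then `f_a` has three distinct real roots `ρ₁, ρ₂, ρ₃`,
which can be labelled so that `ρ₂ = -1 - 1/ρ₁`, `ρ₃ = -1 - 1/ρ₂`, and they satisfy
`a+1 < ρ₁ < a+2`, `-1 - 1/(a+1) < ρ₂ < -1 - 1/(a+2)` and `-1/(a+2) < ρ₃ < -1/(a+3)`. -/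
theorem simplest_cubic_real_roots (a : ℤ) (ha : 100 < a) :
    ∃ ρ₁ ρ₂ ρ₃ : ℝ,
      ρ₁ ≠ ρ₂ ∧ ρ₁ ≠ ρ₃ ∧ ρ₂ ≠ ρ₃ ∧
      ρ₁ ^ 3 - (a : ℝ) * ρ₁ ^ 2 - ((a : ℝ) + 3) * ρ₁ - 1 = 0 ∧
      ρ₂ ^ 3 - (a : ℝ) * ρ₂ ^ 2 - ((a : ℝ) + 3) * ρ₂ - 1 = 0 ∧
      ρ₃ ^ 3 - (a : ℝ) * ρ₃ ^ 2 - ((a : ℝ) + 3) * ρ₃ - 1 = 0 ∧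
      ρ₂ = -1 - 1/ρ₁ ∧ ρ₃ = -1 - 1/ρ₂ ∧
      (a : ℝ) + 1 < ρ₁ ∧ ρ₁ < (a : ℝ) + 2 ∧
      -1 - 1/((a : ℝ) + 1) < ρ₂ ∧ ρ₂ < -1 - 1/((a : ℝ) + 2) ∧
      -1/((a : ℝ) + 2) < ρ₃ ∧ ρ₃ < -1/((a : ℝ) + 3) := by
  have hA : (100 : ℝ) < (a : ℝ) := by exact_mod_cast ha
  -- find the large root by IVT
  obtain ⟨ρ₁, hmem, hval⟩ :
      ∃ x ∈ Set.Ioo ((a : ℝ) + 1) ((a : ℝ) + 2),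
        (fun x : ℝ => x ^ 3 - (a : ℝ) * x ^ 2 - ((a : ℝ) + 3) * x - 1) x = 0 := by
    have hcont : ContinuousOn
        (fun x : ℝ => x ^ 3 - (a : ℝ) * x ^ 2 - ((a : ℝ) + 3) * x - 1)
        (Set.Icc ((a : ℝ) + 1) ((a : ℝ) + 2)) := by
      apply Continuous.continuousOn; fun_prop
    have hsub := intermediate_value_Ioo (by linarith : (a : ℝ) + 1 ≤ (a : ℝ) + 2) hcont
    have h0mem : (0 : ℝ) ∈ Set.Ioo
        (((a : ℝ) + 1) ^ 3 - (a : ℝ) * ((a : ℝ) + 1) ^ 2 - ((a : ℝ) + 3) * ((a : ℝ) + 1) - 1)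
        (((a : ℝ) + 2) ^ 3 - (a : ℝ) * ((a : ℝ) + 2) ^ 2 - ((a : ℝ) + 3) * ((a : ℝ) + 2) - 1) := by
      constructor <;> nlinarith
    obtain ⟨x, hx, hfx⟩ := hsub h0mem
    exact ⟨x, hx, hfx⟩
  obtain ⟨h1l, h1r⟩ := hmem
  simp only at hval
  have hρ₁pos : 0 < ρ₁ := by linarith
  have hρ₁ne : ρ₁ ≠ 0 := ne_of_gt hρ₁pos
  have hinvpos : 0 < 1 / ρ₁ := by positivity
  have htpos : 0 < 1 / ((a : ℝ) + 2) := by positivity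
  -- the second root
  have hroot2 := cubic_next_root (a : ℝ) ρ₁ hρ₁ne hval
  have hq1l : 1 / ((a : ℝ) + 2) < 1 / ρ₁ := one_div_lt_one_div_of_lt hρ₁pos h1r
  have hq1r : 1 / ρ₁ < 1 / ((a : ℝ) + 1) := one_div_lt_one_div_of_lt (by linarith) h1l
  have h2l : -1 - 1 / ((a : ℝ) + 1) < -1 - 1 / ρ₁ := by linarith
  have h2r : -1 - 1 / ρ₁ < -1 - 1 / ((a : ℝ) + 2) := by linarith
  have hρ₂neg : -1 - 1 / ρ₁ < 0 := by linarith
  have hρ₂ne : -1 - 1 / ρ₁ ≠ 0 := ne_of_lt hρ₂neg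
  -- the third root
  have hroot3 := cubic_next_root (a : ℝ) (-1 - 1 / ρ₁) hρ₂ne hroot2
  have heq3 : -1 - 1 / (-1 - 1 / ρ₁) = -1 / (ρ₁ + 1) := double_transform ρ₁ hρ₁pos
  have h3l : -1 / ((a : ℝ) + 2) < -1 - 1 / (-1 - 1 / ρ₁) := by
    rw [heq3, neg_div, neg_div, neg_lt_neg_iff]
    exact one_div_lt_one_div_of_lt (by linarith) (by linarith)
  have h3r : -1 - 1 / (-1 - 1 / ρ₁) < -1 / ((a : ℝ) + 3) := by
    rw [heq3, neg_div, neg_div, neg_lt_neg_iff]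
    exact one_div_lt_one_div_of_lt (by linarith) (by linarith)
  refine ⟨ρ₁, -1 - 1 / ρ₁, -1 - 1 / (-1 - 1 / ρ₁), ?_, ?_, ?_,
    hval, hroot2, hroot3, rfl, rfl, h1l, h1r, h2l, h2r, h3l, h3r⟩
  · intro h; rw [← h] at hρ₂neg; linarith
  · intro h
    have hneg : -1 - 1 / (-1 - 1 / ρ₁) < 0 := by
      rw [heq3, neg_div]
      have : 0 < 1 / (ρ₁ + 1) := by positivity
      linarith
    rw [h] at hρ₁pos; linarith
  · intro h
    rw [← h] at h3l
    have hnd : -1 / ((a : ℝ) + 2) = -(1 / ((a : ℝ) + 2)) := by rw [neg_div]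
    linarith
end

section
/- Let a > 100 be an integer, let u₂ = s·ε^{x₂}·δ^{y₂} with s ∈ {1,-1} and integers x₂, y₂, and set X = max{|x₂|, |y₂|}. Then there exists τ ∈ Gal(K/ℚ) and integers x̄₂, ȳ₂ such that |τ(u₂)| = ε^{x̄₂}·δ^{ȳ₂} and either (a) x̄₂ = X and ȳ₂ ≥ -X, or (b) x̄₂ ≥ X/2 and ȳ₂ ≥ -X/2. -/
open IntermediateField Polynomial

private lemma no_rat_root_aux (a : ℤ) (ha : 100 < a) (r : ℚ)
    (hr : r^3 - (a:ℚ)*r^2 - ((a:ℚ)+3)*r - 1 = 0) : False := by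
  have hint : IsIntegral ℤ r := by
    refine ⟨X^3 - C a * X^2 - C (a+3) * X - 1, ?_, ?_⟩
    · monicity!
    · simp only [eval₂_sub, eval₂_mul, eval₂_pow, eval₂_X, eval₂_C, eval₂_one]
      simp only [algebraMap_int_eq, eq_intCast]
      push_cast
      linear_combination hr
  obtain ⟨n, hn⟩ := IsIntegrallyClosed.isIntegral_iff.mp hint
  have hn' : (n:ℚ) = r := hn
  rw [← hn'] at hr
  have hz : n^3 - a*n^2 - (a+3)*n - 1 = 0 := by exact_mod_cast hr
  have h1 : n * (n^2 - a*n - (a+3)) = 1 := by linear_combination hz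
  rcases Int.isUnit_eq_one_or (IsUnit.of_mul_eq_one (a := n) _ h1) with h | h <;> subst h <;> nlinarith

private lemma abs_zpow_aux (b : ℝ) (m : ℤ) : |b ^ m| = |b| ^ m :=
  map_zpow₀ (absHom : ℝ →*₀ ℝ) b m

private lemma abs_form_aux (s b : ℝ) (hs : s = 1 ∨ s = -1) (m n : ℤ) :
    |s * b ^ m * (1 + b⁻¹) ^ n| = |b| ^ m * |1 + b⁻¹| ^ n := by
  rcases hs with rfl | rfl <;>
    simp [abs_mul, abs_zpow_aux]

private lemma zpow_form_aux (p q : ℝ) (hp : p ≠ 0) (hq : q ≠ 0) (m n : ℤ) :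
    q ^ m * ((p * q)⁻¹) ^ n = p ^ (-n) * q ^ (m - n) := by
  rw [inv_zpow, ← zpow_neg, mul_zpow, sub_eq_add_neg, zpow_add₀ hq]
  ring

set_option maxHeartbeats 1000000 in
/-- Let `a > 100` be an integer, `ρ = ρ₁` the largest real root of `f_a`
(so `a+1 < ρ < a+2`), `K = ℚ(ρ) ⊆ ℝ`, `ε = ρ` and `δ = 1 + 1/ρ`. If
`u₂ = s·ε^{x₂}·δ^{y₂}` with `s ∈ {1,-1}` and `X = max{|x₂|,|y₂|}`, then there is
`τ ∈ Gal(K/ℚ)` and integers `x̄₂, ȳ₂` with `|τ(u₂)| = ε^{x̄₂}·δ^{ȳ₂}` and either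
(a) `x̄₂ = X` and `ȳ₂ ≥ -X`, or (b) `x̄₂ ≥ X/2` and `ȳ₂ ≥ -X/2`. -/
theorem embedding_lemma (a : ℤ) (ha : 100 < a) (ρ : ℝ)
    (hroot : ρ ^ 3 - (a : ℝ) * ρ ^ 2 - ((a : ℝ) + 3) * ρ - 1 = 0)
    (hρ₁ : (a : ℝ) + 1 < ρ) (hρ₂ : ρ < (a : ℝ) + 2)
    (s : ℝ) (hs : s = 1 ∨ s = -1) (x₂ y₂ : ℤ)
    (u₂ : ℚ⟮ρ⟯) (hu₂ : (u₂ : ℝ) = s * ρ ^ x₂ * (1 + ρ⁻¹) ^ y₂) :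
    ∃ (τ : ℚ⟮ρ⟯ ≃ₐ[ℚ] ℚ⟮ρ⟯) (xbar ybar : ℤ),
      |((τ u₂ : ℚ⟮ρ⟯) : ℝ)| = ρ ^ xbar * (1 + ρ⁻¹) ^ ybar ∧
      ((xbar = |x₂| ⊔ |y₂| ∧ -(|x₂| ⊔ |y₂|) ≤ ybar) ∨
        (|x₂| ⊔ |y₂| ≤ 2 * xbar ∧ -(|x₂| ⊔ |y₂|) ≤ 2 * ybar)) := by
  have ha' : (100:ℝ) < (a:ℝ) := by exact_mod_cast ha
  have hρ0 : (0:ℝ) < ρ := by linarith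
  have hρne : ρ ≠ 0 := ne_of_gt hρ0
  have hδ0 : (0:ℝ) < 1 + ρ⁻¹ := by positivity
  have hδne : (1 + ρ⁻¹ : ℝ) ≠ 0 := ne_of_gt hδ0
  have hρ1ne : (ρ + 1 : ℝ) ≠ 0 := by positivity
  -- the conjugate roots
  set ρ2 : ℝ := -1 - ρ⁻¹ with hρ2def
  have hρ2neg : ρ2 < 0 := by
    have : (0:ℝ) < ρ⁻¹ := by positivity
    simp only [hρ2def]; linarith
  have hρ2ne : ρ2 ≠ 0 := ne_of_lt hρ2neg
  have habsρ2 : |ρ2| = 1 + ρ⁻¹ := by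
    rw [abs_of_neg hρ2neg, hρ2def]; ring
  have hroot2 : ρ2 ^ 3 - (a:ℝ) * ρ2 ^ 2 - ((a:ℝ) + 3) * ρ2 - 1 = 0 := by
    rw [hρ2def]
    field_simp
    linear_combination hroot
  have hδρ : ρ * (1 + ρ⁻¹) = ρ + 1 := by field_simp
  have hρ2inv : ρ2⁻¹ = -ρ / (ρ + 1) := by
    refine inv_eq_of_mul_eq_one_right ?_
    rw [hρ2def]
    field_simp
    ring
  have h1ρ2 : 1 + ρ2⁻¹ = (ρ * (1 + ρ⁻¹))⁻¹ := by
    rw [hρ2inv, hδρ]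
    field_simp
    ring
  have h1ρ2pos : 0 < 1 + ρ2⁻¹ := by
    rw [h1ρ2, hδρ]
    positivity
  -- the minimal polynomial
  set F : ℚ[X] := X^3 - C (a:ℚ) * X^2 - C ((a:ℚ)+3) * X - 1 with hFdef
  have hFm : F.Monic := by rw [hFdef]; monicity!
  have hFdeg : F.natDegree = 3 := by rw [hFdef]; compute_degree!
  have hFroots : F.roots = 0 := by
    rw [Multiset.eq_zero_iff_forall_notMem]
    intro r hr
    rw [mem_roots hFm.ne_zero] at hr
    rw [IsRoot.def, hFdef] at hr
    simp only [eval_sub, eval_mul, eval_pow, eval_X, eval_C, eval_one] at hr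
    exact no_rat_root_aux a ha r (by linear_combination hr)
  have hFirr : Irreducible F :=
    (irreducible_iff_roots_eq_zero_of_degree_le_three (by omega) (by omega)).mpr hFroots
  have haevF : ∀ x : ℝ, x ^ 3 - (a:ℝ) * x ^ 2 - ((a:ℝ)+3) * x - 1 = 0 →
      Polynomial.aeval x F = 0 := by
    intro x hx
    rw [hFdef]
    simp only [map_sub, map_mul, map_pow, aeval_X, aeval_C, map_one]
    simp only [eq_ratCast]
    push_cast
    linear_combination hx
  have hFρ : Polynomial.aeval ρ F = 0 := haevF ρ hroot
  have hint : IsIntegral ℚ ρ := ⟨F, hFm, by rw [← aeval_def]; exact hFρ⟩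
  have hminp : minpoly ℚ ρ = F :=
    (minpoly.eq_of_irreducible_of_monic hFirr hFρ hFm).symm
  -- the field and the automorphism
  haveI hFD : FiniteDimensional ℚ ℚ⟮ρ⟯ := IntermediateField.adjoin.finiteDimensional hint
  haveI : Algebra.IsAlgebraic ℚ ℚ⟮ρ⟯ := Algebra.IsAlgebraic.of_finite ℚ _
  set g : ℚ⟮ρ⟯ := AdjoinSimple.gen ℚ ρ with hgdef
  have hgcoe : (g : ℝ) = ρ := rfl
  have hι : ∀ x : ℚ⟮ρ⟯, algebraMap ℚ⟮ρ⟯ ℝ x = (x : ℝ) := fun x => rfl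
  set r2 : ℚ⟮ρ⟯ := -1 - g⁻¹ with hr2def
  have hr2coe : (r2 : ℝ) = ρ2 := by
    have h0 : (r2 : ℝ) = algebraMap ℚ⟮ρ⟯ ℝ (-1 - g⁻¹) := rfl
    rw [h0, map_sub, map_neg, map_one, map_inv₀, hι, hgcoe, hρ2def]
  have haev2 : Polynomial.aeval r2 (minpoly ℚ (IntermediateField.adjoin.powerBasis hint).gen)
      = 0 := by
    rw [IntermediateField.adjoin.powerBasis_gen]
    erw [IntermediateField.minpoly_gen ℚ ρ]
    rw [hminp]
    apply (algebraMap ℚ⟮ρ⟯ ℝ).injective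
    rw [map_zero, ← Polynomial.aeval_algebraMap_apply, hι, hr2coe]
    exact haevF ρ2 hroot2
  set φ : ℚ⟮ρ⟯ →ₐ[ℚ] ℚ⟮ρ⟯ := (IntermediateField.adjoin.powerBasis hint).lift r2 haev2 with hφdef
  set σ : ℚ⟮ρ⟯ ≃ₐ[ℚ] ℚ⟮ρ⟯ :=
    AlgEquiv.ofBijective φ (Algebra.IsAlgebraic.algHom_bijective φ) with hσdef
  have hσg : σ g = r2 := by
    have h1 : φ (IntermediateField.adjoin.powerBasis hint).gen = r2 :=
      (IntermediateField.adjoin.powerBasis hint).lift_gen r2 haev2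
    rw [IntermediateField.adjoin.powerBasis_gen] at h1
    exact h1
  -- express u₂ inside the field
  have hsLmem : s ∈ ℚ⟮ρ⟯ := by
    rcases hs with rfl | rfl
    · exact one_mem _
    · exact neg_mem (one_mem _)
  set sL : ℚ⟮ρ⟯ := ⟨s, hsLmem⟩ with hsLdef
  have hsL1 : sL = 1 ∨ sL = -1 := by
    rcases hs with h | h
    · left; exact Subtype.ext h
    · right; exact Subtype.ext h
  have hcoeL : ∀ (w t : ℚ⟮ρ⟯),
      ((w * t ^ x₂ * (1 + t⁻¹) ^ y₂ : ℚ⟮ρ⟯) : ℝ)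
        = (w : ℝ) * (t : ℝ) ^ x₂ * (1 + (t : ℝ)⁻¹) ^ y₂ := by
    intro w t
    have h0 : ((w * t ^ x₂ * (1 + t⁻¹) ^ y₂ : ℚ⟮ρ⟯) : ℝ)
        = algebraMap ℚ⟮ρ⟯ ℝ (w * t ^ x₂ * (1 + t⁻¹) ^ y₂) := rfl
    rw [h0, map_mul, map_mul, map_zpow₀, map_zpow₀, map_add, map_one, map_inv₀]
    simp only [hι]
  have hu2L : u₂ = sL * g ^ x₂ * (1 + g⁻¹) ^ y₂ := by
    apply Subtype.ext
    rw [hu₂]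
    have := hcoeL sL g
    rw [hgcoe] at this
    exact this.symm
  -- value of τ(u₂) for each automorphism
  have hval : ∀ τ : ℚ⟮ρ⟯ ≃ₐ[ℚ] ℚ⟮ρ⟯,
      |((τ u₂ : ℚ⟮ρ⟯) : ℝ)| = |((τ g : ℚ⟮ρ⟯) : ℝ)| ^ x₂ * |1 + ((τ g : ℚ⟮ρ⟯) : ℝ)⁻¹| ^ y₂ := by
    intro τ
    rw [hu2L]
    have h1 : τ (sL * g ^ x₂ * (1 + g⁻¹) ^ y₂) = sL * (τ g) ^ x₂ * (1 + (τ g)⁻¹) ^ y₂ := by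
      rcases hsL1 with h | h <;>
        simp [map_mul, map_zpow₀, map_inv₀, map_add, map_one, h]
    rw [h1, hcoeL sL (τ g)]
    exact abs_form_aux s _ hs x₂ y₂
  -- the three conjugate values
  have hval1 : |(((AlgEquiv.refl : ℚ⟮ρ⟯ ≃ₐ[ℚ] ℚ⟮ρ⟯) u₂ : ℚ⟮ρ⟯) : ℝ)|
      = ρ ^ x₂ * (1 + ρ⁻¹) ^ y₂ := by
    rw [hval AlgEquiv.refl]
    simp only [AlgEquiv.coe_refl, id_eq]
    rw [hgcoe, abs_of_pos hρ0, abs_of_pos hδ0]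
  have hσgcoe : ((σ g : ℚ⟮ρ⟯) : ℝ) = ρ2 := by rw [hσg, hr2coe]
  have hvalσ : |((σ u₂ : ℚ⟮ρ⟯) : ℝ)| = ρ ^ (-y₂) * (1 + ρ⁻¹) ^ (x₂ - y₂) := by
    rw [hval σ, hσgcoe, habsρ2, abs_of_pos h1ρ2pos, h1ρ2]
    exact zpow_form_aux ρ (1 + ρ⁻¹) hρne hδne x₂ y₂
  -- σ² values
  have hσr2 : σ r2 = -1 - r2⁻¹ := by
    rw [hr2def]
    rw [map_sub, map_neg, map_one, map_inv₀, hσg]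
  have hσ2gcoe : ((σ (σ g) : ℚ⟮ρ⟯) : ℝ) = -1 - ρ2⁻¹ := by
    rw [hσg, hσr2]
    have h0 : ((-1 - r2⁻¹ : ℚ⟮ρ⟯) : ℝ) = algebraMap ℚ⟮ρ⟯ ℝ (-1 - r2⁻¹) := rfl
    rw [h0, map_sub, map_neg, map_one, map_inv₀, hι, hr2coe]
  have hρ3 : (-1 - ρ2⁻¹ : ℝ) = -(ρ * (1 + ρ⁻¹))⁻¹ := by
    rw [hδρ, hρ2inv]
    field_simp
    ring
  have habsρ3 : |(-1 - ρ2⁻¹ : ℝ)| = ((ρ * (1 + ρ⁻¹))⁻¹ : ℝ) := by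
    rw [hρ3, abs_neg, abs_of_pos (by rw [hδρ]; positivity)]
  have h1ρ3 : (1 : ℝ) + (-1 - ρ2⁻¹)⁻¹ = -ρ := by
    rw [hρ3, hδρ]
    field_simp
    ring
  have hvalσ2 : |(((σ.trans σ) u₂ : ℚ⟮ρ⟯) : ℝ)| = ρ ^ (y₂ - x₂) * (1 + ρ⁻¹) ^ (-x₂) := by
    have h2 := hval (σ.trans σ)
    simp only [AlgEquiv.trans_apply] at h2
    have h3 : ((σ.trans σ) u₂ : ℚ⟮ρ⟯) = σ (σ u₂) := rfl
    rw [h3, h2, hσ2gcoe, habsρ3, h1ρ3, abs_neg, abs_of_pos hρ0]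
    have h4 := zpow_form_aux (1 + ρ⁻¹) ρ hδne hρne y₂ x₂
    rw [mul_comm (1 + ρ⁻¹) ρ] at h4
    rw [mul_comm ((ρ * (1 + ρ⁻¹))⁻¹ ^ x₂) (ρ ^ y₂), h4]
    ring
  -- integer combinatorics
  have hcomb :
      ((x₂ = |x₂| ⊔ |y₂| ∧ -(|x₂| ⊔ |y₂|) ≤ y₂) ∨ (|x₂| ⊔ |y₂| ≤ 2*x₂ ∧ -(|x₂| ⊔ |y₂|) ≤ 2*y₂)) ∨
      ((-y₂ = |x₂| ⊔ |y₂| ∧ -(|x₂| ⊔ |y₂|) ≤ x₂ - y₂) ∨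
        (|x₂| ⊔ |y₂| ≤ 2*(-y₂) ∧ -(|x₂| ⊔ |y₂|) ≤ 2*(x₂-y₂))) ∨
      ((y₂ - x₂ = |x₂| ⊔ |y₂| ∧ -(|x₂| ⊔ |y₂|) ≤ -x₂) ∨
        (|x₂| ⊔ |y₂| ≤ 2*(y₂-x₂) ∧ -(|x₂| ⊔ |y₂|) ≤ 2*(-x₂))) := by
    have hx := abs_choice x₂
    have hy := abs_choice y₂
    have hm := max_choice |x₂| |y₂|
    have h1 : |x₂| ≤ |x₂| ⊔ |y₂| := le_max_left _ _
    have h2 : |y₂| ≤ |x₂| ⊔ |y₂| := le_max_right _ _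
    omega
  rcases hcomb with h | h | h
  · exact ⟨AlgEquiv.refl, x₂, y₂, hval1, by tauto⟩
  · exact ⟨σ, -y₂, x₂ - y₂, hvalσ, by tauto⟩
  · exact ⟨σ.trans σ, y₂ - x₂, -x₂, hvalσ2, by tauto⟩
end

section
/- Let a > 100 be an integer. Every solution (u₁, u₂, n) to the unit equation is equivalent to a solution (v₁, v₂, m) for which there exist integers x₁, y₁, x₂, y₂ and s ∈ {1,-1} with v₁ = ε^{x₁}·δ^{y₁}, v₂ = s·ε^{x₂}·δ^{y₂}, and |v₂| ≥ a^{X/2} where X = max{|x₁|, |x₂|, |y₁|, |y₂|}, with strict inequality |v₂| > a^{X/2} whenever X ≥ 1. -/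
open IntermediateField

noncomputable section

/-- The generator `ρ` of `K = ℚ(ρ) ⊆ ℝ` as an element of the intermediate field. -/
def rhoGen (ρ : ℝ) : ℚ⟮ρ⟯ := AdjoinSimple.gen ℚ ρ

/-- The order `ℤ[ρ]` inside `K = ℚ(ρ)`. -/
def Zrho (ρ : ℝ) : Subalgebra ℤ ℚ⟮ρ⟯ := Algebra.adjoin ℤ {rhoGen ρ}

/-- `u` is a unit of the order `ℤ[ρ]`. -/
def IsZrhoUnit (ρ : ℝ) (u : ℚ⟮ρ⟯) : Prop :=
  u ∈ Zrho ρ ∧ ∃ v ∈ Zrho ρ, u * v = 1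

/-- A solution of the unit equation: `u₁, u₂` are units of `ℤ[ρ]`, `n ∈ ℤ`,
`|n| ≤ a^{1/3}` and `u₁ + u₂ = n`. -/
def IsSolution (a : ℤ) (ρ : ℝ) (u₁ u₂ : ℚ⟮ρ⟯) (n : ℤ) : Prop :=
  IsZrhoUnit ρ u₁ ∧ IsZrhoUnit ρ u₂ ∧
    |(n : ℝ)| ≤ (a : ℝ) ^ ((1 : ℝ) / 3) ∧ u₁ + u₂ = (n : ℚ⟮ρ⟯)

/-- One elementary operation on solution triples: change of signs, swap of the two
units, or application of an element of `Gal(K/ℚ)`. -/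
inductive SolStep (ρ : ℝ) : ℚ⟮ρ⟯ × ℚ⟮ρ⟯ × ℤ → ℚ⟮ρ⟯ × ℚ⟮ρ⟯ × ℤ → Prop
  | neg (u₁ u₂ : ℚ⟮ρ⟯) (n : ℤ) : SolStep ρ (u₁, u₂, n) (-u₁, -u₂, -n)
  | swap (u₁ u₂ : ℚ⟮ρ⟯) (n : ℤ) : SolStep ρ (u₁, u₂, n) (u₂, u₁, n)
  | galois (τ : ℚ⟮ρ⟯ ≃ₐ[ℚ] ℚ⟮ρ⟯) (u₁ u₂ : ℚ⟮ρ⟯) (n : ℤ) :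
      SolStep ρ (u₁, u₂, n) (τ u₁, τ u₂, n)

/-- Two solution triples are equivalent if one is obtained from the other by a
combination of the elementary operations. -/
def SolEquiv (ρ : ℝ) : ℚ⟮ρ⟯ × ℚ⟮ρ⟯ × ℤ → ℚ⟮ρ⟯ × ℚ⟮ρ⟯ × ℤ → Prop :=
  Relation.ReflTransGen (SolStep ρ)

/-- A solution triple is trivial if it is equivalent to `(1,1,2)`, to `(u,-u,0)`
for some unit `u` of `ℤ[ρ]`, or to `(ρ+1, -ρ, 1)`. -/
def IsTrivialSolution (ρ : ℝ) (u₁ u₂ : ℚ⟮ρ⟯) (n : ℤ) : Prop :=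
  SolEquiv ρ (u₁, u₂, n) (1, 1, 2) ∨
  (∃ u : ℚ⟮ρ⟯, IsZrhoUnit ρ u ∧ SolEquiv ρ (u₁, u₂, n) (u, -u, 0)) ∨
  SolEquiv ρ (u₁, u₂, n) (rhoGen ρ + 1, -(rhoGen ρ), 1)

end


section AuxiliaryLemmas

open Polynomial

namespace GoodSol

noncomputable section

theorem cubic_monic (a : ℤ) : (X^3 - C a * X^2 - C (a+3) * X - 1 : ℤ[X]).Monic := by
  monicity!

theorem cubic_natDegree (a : ℤ) : (X^3 - C a * X^2 - C (a+3) * X - 1 : ℤ[X]).natDegree = 3 := by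
  compute_degree!

theorem cubic_irred (a : ℤ) (ha : 100 < a) :
    Irreducible ((X^3 - C a * X^2 - C (a+3) * X - 1 : ℤ[X]).map (algebraMap ℤ ℚ)) := by
  set F : ℤ[X] := X^3 - C a * X^2 - C (a+3) * X - 1 with hF
  have hFmonic : F.Monic := cubic_monic a
  have hdeg : (F.map (algebraMap ℤ ℚ)).natDegree = 3 := by
    rw [hFmonic.natDegree_map]; exact cubic_natDegree a
  rw [irreducible_iff_roots_eq_zero_of_degree_le_three (by omega) (by omega)]
  rw [Multiset.eq_zero_iff_forall_notMem]
  intro r hr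
  have hne : F.map (algebraMap ℤ ℚ) ≠ 0 := by
    intro h; rw [h] at hdeg; simp at hdeg
  rw [mem_roots hne] at hr
  have haev : aeval r F = 0 := by
    have := hr
    rwa [IsRoot, Polynomial.eval_map, ← Polynomial.aeval_def] at this
  obtain ⟨n, hn⟩ := isInteger_of_is_root_of_monic hFmonic haev
  rw [← hn] at haev
  have heval0 : F.eval n = 0 := by
    rw [aeval_algebraMap_apply] at haev
    simpa using haev
  have heval : n^3 - a*n^2 - (a+3)*n - 1 = 0 := by
    simpa [hF] using heval0
  have hdvd : n ∣ 1 := ⟨n^2 - a*n - (a+3), by linarith⟩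
  rcases Int.isUnit_iff.mp (isUnit_of_dvd_one hdvd) with h | h <;> subst h <;> omega

variable (a : ℤ) (ρ : ℝ)

theorem gen_cubic (hroot : ρ ^ 3 - (a : ℝ) * ρ ^ 2 - ((a : ℝ) + 3) * ρ - 1 = 0) :
    (rhoGen ρ)^3 - (a : ℚ⟮ρ⟯) * (rhoGen ρ)^2 - ((a : ℚ⟮ρ⟯)+3) * (rhoGen ρ) - 1 = 0 := by
  have h : (((rhoGen ρ)^3 - (a : ℚ⟮ρ⟯) * (rhoGen ρ)^2 - ((a : ℚ⟮ρ⟯)+3) * (rhoGen ρ) - 1 : ℚ⟮ρ⟯) : ℝ)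
      = ρ ^ 3 - (a : ℝ) * ρ ^ 2 - ((a : ℝ) + 3) * ρ - 1 := by
    push_cast
    rfl
  rw [← ZeroMemClass.coe_eq_zero, h, hroot]

theorem rho_integral (hroot : ρ ^ 3 - (a : ℝ) * ρ ^ 2 - ((a : ℝ) + 3) * ρ - 1 = 0) :
    IsIntegral ℚ ρ := by
  refine ⟨(X^3 - C a * X^2 - C (a+3) * X - 1 : ℤ[X]).map (algebraMap ℤ ℚ),
    (cubic_monic a).map _, ?_⟩
  show eval₂ _ _ _ = 0
  rw [← aeval_def, aeval_map_algebraMap]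
  simp only [map_sub, map_mul, map_add, map_pow, map_one, aeval_X, aeval_C, eq_intCast,
    map_intCast]
  push_cast
  linear_combination hroot

theorem minpoly_rho (hroot : ρ ^ 3 - (a : ℝ) * ρ ^ 2 - ((a : ℝ) + 3) * ρ - 1 = 0) (ha : 100 < a) :
    minpoly ℚ ρ = (X^3 - C a * X^2 - C (a+3) * X - 1 : ℤ[X]).map (algebraMap ℤ ℚ) := by
  have hmon : ((X^3 - C a * X^2 - C (a+3) * X - 1 : ℤ[X]).map (algebraMap ℤ ℚ)).Monic :=
    (cubic_monic a).map _
  have haev : aeval ρ ((X^3 - C a * X^2 - C (a+3) * X - 1 : ℤ[X]).map (algebraMap ℤ ℚ)) = 0 := by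
    rw [aeval_map_algebraMap]
    simp only [map_sub, map_mul, map_add, map_pow, map_one, aeval_X, aeval_C, eq_intCast,
      map_intCast]
    push_cast
    linear_combination hroot
  exact (minpoly.eq_of_irreducible_of_monic (cubic_irred a ha) haev hmon).symm

theorem exists_sigma (ha : 100 < a) (hρ₁ : (a : ℝ) + 1 < ρ)
    (hroot : ρ ^ 3 - (a : ℝ) * ρ ^ 2 - ((a : ℝ) + 3) * ρ - 1 = 0) :
    ∃ σ : ℚ⟮ρ⟯ ≃ₐ[ℚ] ℚ⟮ρ⟯, σ (rhoGen ρ) = -1 - (rhoGen ρ)⁻¹ := by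
  have hρpos : (0:ℝ) < ρ := by
    have : (100:ℝ) < (a:ℝ) := by exact_mod_cast ha
    linarith
  have he0 : rhoGen ρ ≠ 0 := by
    rw [ne_eq, ← ZeroMemClass.coe_eq_zero]
    show ¬ (ρ = 0)
    linarith
  have hcube := gen_cubic a ρ hroot
  have hI := rho_integral a ρ hroot
  have FD : FiniteDimensional ℚ ℚ⟮ρ⟯ := IntermediateField.adjoin.finiteDimensional hI
  let pb := IntermediateField.adjoin.powerBasis hI
  have hgen : pb.gen = rhoGen ρ := rfl
  have h0 : aeval (-1 - (rhoGen ρ)⁻¹) (minpoly ℚ pb.gen) = 0 := by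
    rw [hgen]
    rw [show minpoly ℚ (rhoGen ρ) = minpoly ℚ ρ from minpoly_eq _]
    rw [minpoly_rho a ρ hroot ha, aeval_map_algebraMap]
    simp only [map_sub, map_mul, map_add, map_pow, map_one, aeval_X, aeval_C, eq_intCast,
      map_intCast]
    field_simp
    linear_combination hcube
  let σ' : ℚ⟮ρ⟯ →ₐ[ℚ] ℚ⟮ρ⟯ := pb.lift _ h0
  have hinj : Function.Injective σ' := σ'.toRingHom.injective
  have hsurj : Function.Surjective σ' :=
    LinearMap.injective_iff_surjective.mp (show Function.Injective σ'.toLinearMap from hinj)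
  refine ⟨AlgEquiv.ofBijective σ' ⟨hinj, hsurj⟩, ?_⟩
  show σ' (rhoGen ρ) = _
  rw [← hgen]
  exact pb.lift_gen _ h0

theorem inv_gen_eq
    (hcube : (rhoGen ρ)^3 - (a : ℚ⟮ρ⟯) * (rhoGen ρ)^2 - ((a : ℚ⟮ρ⟯)+3) * (rhoGen ρ) - 1 = 0) :
    (rhoGen ρ)⁻¹ = (rhoGen ρ)^2 - (a : ℚ⟮ρ⟯) * (rhoGen ρ) - ((a : ℚ⟮ρ⟯)+3) := by
  have h : (rhoGen ρ) * ((rhoGen ρ)^2 - (a : ℚ⟮ρ⟯) * (rhoGen ρ) - ((a : ℚ⟮ρ⟯)+3)) = 1 := by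
    linear_combination hcube
  exact inv_eq_of_mul_eq_one_right h

theorem inv_gen_mem
    (hcube : (rhoGen ρ)^3 - (a : ℚ⟮ρ⟯) * (rhoGen ρ)^2 - ((a : ℚ⟮ρ⟯)+3) * (rhoGen ρ) - 1 = 0) :
    (rhoGen ρ)⁻¹ ∈ Zrho ρ := by
  rw [inv_gen_eq a ρ hcube]
  have he : rhoGen ρ ∈ Zrho ρ := Algebra.subset_adjoin rfl
  have haK : ((a : ℚ⟮ρ⟯)) ∈ Zrho ρ := by
    have : ((a : ℚ⟮ρ⟯)) = algebraMap ℤ ℚ⟮ρ⟯ a := by norm_cast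
    rw [this]; exact Subalgebra.algebraMap_mem _ a
  have h3 : ((a : ℚ⟮ρ⟯) + 3) ∈ Zrho ρ := by
    exact Subalgebra.add_mem _ haK (by exact_mod_cast Subalgebra.natCast_mem (Zrho ρ) 3)
  exact Subalgebra.sub_mem _ (Subalgebra.sub_mem _ (Subalgebra.pow_mem _ he 2)
    (Subalgebra.mul_mem _ haK he)) h3

theorem sigma_maps_Zrho (σ : ℚ⟮ρ⟯ ≃ₐ[ℚ] ℚ⟮ρ⟯) (hσ : σ (rhoGen ρ) = -1 - (rhoGen ρ)⁻¹)
    (hcube : (rhoGen ρ)^3 - (a : ℚ⟮ρ⟯) * (rhoGen ρ)^2 - ((a : ℚ⟮ρ⟯)+3) * (rhoGen ρ) - 1 = 0) :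
    ∀ z ∈ Zrho ρ, σ z ∈ Zrho ρ := by
  intro z hz
  induction hz using Algebra.adjoin_induction with
  | mem x hx =>
    rcases hx with rfl
    rw [hσ]
    exact Subalgebra.sub_mem _ (Subalgebra.neg_mem _ (Subalgebra.one_mem _))
      (inv_gen_mem a ρ hcube)
  | algebraMap r =>
    have : σ ((algebraMap ℤ ℚ⟮ρ⟯) r) = (algebraMap ℤ ℚ⟮ρ⟯) r := by
      have hr : ((algebraMap ℤ ℚ⟮ρ⟯) r) = ((r : ℤ) : ℚ⟮ρ⟯) := by norm_cast
      rw [hr, map_intCast]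
    rw [this]
    exact Subalgebra.algebraMap_mem _ r
  | add x y _ _ hx hy => rw [map_add]; exact Subalgebra.add_mem _ hx hy
  | mul x y _ _ hx hy => rw [map_mul]; exact Subalgebra.mul_mem _ hx hy

theorem sol_neg {u₁ u₂ : ℚ⟮ρ⟯} {n : ℤ} (h : IsSolution a ρ u₁ u₂ n) :
    IsSolution a ρ (-u₁) (-u₂) (-n) := by
  obtain ⟨⟨h1, v1, hv1, hm1⟩, ⟨h2, v2, hv2, hm2⟩, hn, hsum⟩ := h
  refine ⟨⟨Subalgebra.neg_mem _ h1, -v1, Subalgebra.neg_mem _ hv1, by linear_combination hm1⟩,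
    ⟨Subalgebra.neg_mem _ h2, -v2, Subalgebra.neg_mem _ hv2, by linear_combination hm2⟩, ?_, ?_⟩
  · rw [Int.cast_neg, abs_neg]; exact hn
  · push_cast
    linear_combination -hsum

theorem sol_swap {u₁ u₂ : ℚ⟮ρ⟯} {n : ℤ} (h : IsSolution a ρ u₁ u₂ n) :
    IsSolution a ρ u₂ u₁ n := by
  obtain ⟨h1, h2, hn, hsum⟩ := h
  exact ⟨h2, h1, hn, by linear_combination hsum⟩

theorem sol_sigma (σ : ℚ⟮ρ⟯ ≃ₐ[ℚ] ℚ⟮ρ⟯) (hσ : σ (rhoGen ρ) = -1 - (rhoGen ρ)⁻¹)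
    (hcube : (rhoGen ρ)^3 - (a : ℚ⟮ρ⟯) * (rhoGen ρ)^2 - ((a : ℚ⟮ρ⟯)+3) * (rhoGen ρ) - 1 = 0)
    {u₁ u₂ : ℚ⟮ρ⟯} {n : ℤ} (h : IsSolution a ρ u₁ u₂ n) :
    IsSolution a ρ (σ u₁) (σ u₂) n := by
  obtain ⟨⟨h1, v1, hv1, hm1⟩, ⟨h2, v2, hv2, hm2⟩, hn, hsum⟩ := h
  have hmap := sigma_maps_Zrho a ρ σ hσ hcube
  refine ⟨⟨hmap _ h1, σ v1, hmap _ hv1, by rw [← map_mul, hm1, map_one]⟩,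
    ⟨hmap _ h2, σ v2, hmap _ hv2, by rw [← map_mul, hm2, map_one]⟩, hn, ?_⟩
  rw [← map_add, hsum]
  have : ((n : ℚ⟮ρ⟯)) = ((n : ℤ) : ℚ⟮ρ⟯) := rfl
  rw [map_intCast]

theorem sigma_cubed (hroot : ρ ^ 3 - (a : ℝ) * ρ ^ 2 - ((a : ℝ) + 3) * ρ - 1 = 0)
    (ha : 100 < a) (hρ₁ : (a : ℝ) + 1 < ρ)
    (σ : ℚ⟮ρ⟯ ≃ₐ[ℚ] ℚ⟮ρ⟯) (hσ : σ (rhoGen ρ) = -1 - (rhoGen ρ)⁻¹) :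
    ∀ z : ℚ⟮ρ⟯, σ (σ (σ z)) = z := by
  have hρpos : (0:ℝ) < ρ := by
    have : (100:ℝ) < (a:ℝ) := by exact_mod_cast ha
    linarith
  have he0 : rhoGen ρ ≠ 0 := by
    rw [ne_eq, ← ZeroMemClass.coe_eq_zero]; show ¬ (ρ = 0); linarith
  have he1 : rhoGen ρ + 1 ≠ 0 := by
    rw [ne_eq, ← ZeroMemClass.coe_eq_zero]; show ¬ (ρ + 1 = 0); linarith
  have hne : (-1 : ℚ⟮ρ⟯) - (rhoGen ρ)⁻¹ ≠ 0 := by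
    intro h
    have h2 : (rhoGen ρ)⁻¹ = -1 := by linear_combination -h
    have h3 : rhoGen ρ = -1 := by
      rw [← inv_inv (rhoGen ρ), h2, inv_neg, inv_one]
    exact he1 (by rw [h3]; ring)
  have hσ2 : σ (σ (rhoGen ρ)) = -(rhoGen ρ + 1)⁻¹ := by
    rw [hσ, map_sub, map_neg, map_one, map_inv₀, hσ]
    rw [show (-1 - (rhoGen ρ)⁻¹ : ℚ⟮ρ⟯) = -((rhoGen ρ + 1)/rhoGen ρ) from by field_simp; ring]
    rw [inv_neg, inv_div]
    field_simp
    ring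
  have hσ3 : σ (σ (σ (rhoGen ρ))) = rhoGen ρ := by
    rw [hσ2, map_neg, map_inv₀, map_add, map_one, hσ]
    have h1 : (-1 - (rhoGen ρ)⁻¹ + 1) = -(rhoGen ρ)⁻¹ := by ring
    rw [h1]
    field_simp
  have hI := rho_integral a ρ hroot
  let pb := IntermediateField.adjoin.powerBasis hI
  have hgen : pb.gen = rhoGen ρ := rfl
  have hcomp : (σ.toAlgHom.comp (σ.toAlgHom.comp σ.toAlgHom)) = AlgHom.id ℚ ℚ⟮ρ⟯ := by
    apply pb.algHom_ext
    rw [hgen]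
    exact hσ3
  intro z
  exact DFunLike.congr_fun hcomp z

theorem sigma_d (σ : ℚ⟮ρ⟯ ≃ₐ[ℚ] ℚ⟮ρ⟯) (hσ : σ (rhoGen ρ) = -1 - (rhoGen ρ)⁻¹)
    (he0 : rhoGen ρ ≠ 0) (he1 : rhoGen ρ + 1 ≠ 0) :
    σ (1 + (rhoGen ρ)⁻¹) = (rhoGen ρ)⁻¹ * (1 + (rhoGen ρ)⁻¹)⁻¹ := by
  have hd0 : (1 + (rhoGen ρ)⁻¹ : ℚ⟮ρ⟯) ≠ 0 := by
    intro h
    apply he1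
    have := mul_eq_zero_of_right (rhoGen ρ) h
    rw [mul_add, mul_inv_cancel₀ he0] at this
    linear_combination this
  rw [map_add, map_one, map_inv₀, hσ]
  rw [show (-1 - (rhoGen ρ)⁻¹ : ℚ⟮ρ⟯) = -((rhoGen ρ + 1)/rhoGen ρ) from by field_simp; ring]
  rw [inv_neg, inv_div]
  field_simp
  ring

theorem sigma_zpow (σ : ℚ⟮ρ⟯ ≃ₐ[ℚ] ℚ⟮ρ⟯) (hσ : σ (rhoGen ρ) = -1 - (rhoGen ρ)⁻¹)
    (he0 : rhoGen ρ ≠ 0) (he1 : rhoGen ρ + 1 ≠ 0) (x y : ℤ) :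
    σ (rhoGen ρ ^ x * (1 + (rhoGen ρ)⁻¹) ^ y)
      = (-1)^x * (rhoGen ρ ^ (-y) * (1 + (rhoGen ρ)⁻¹) ^ (x - y)) := by
  have hd0 : (1 + (rhoGen ρ)⁻¹ : ℚ⟮ρ⟯) ≠ 0 := by
    intro h
    apply he1
    have := mul_eq_zero_of_right (rhoGen ρ) h
    rw [mul_add, mul_inv_cancel₀ he0] at this
    linear_combination this
  have hσ' : σ (rhoGen ρ) = (-1) * (1 + (rhoGen ρ)⁻¹) := by rw [hσ]; ring
  rw [map_mul, map_zpow₀, map_zpow₀, hσ', sigma_d ρ σ hσ he0 he1]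
  rw [mul_zpow, mul_zpow, inv_zpow', inv_zpow']
  rw [sub_eq_add_neg, zpow_add₀ hd0]
  ring

theorem abs_neg_one_zpow_mul (w : ℚ⟮ρ⟯) (x : ℤ) :
    |((((-1:ℚ⟮ρ⟯))^x * w : ℚ⟮ρ⟯) : ℝ)| = |(w : ℝ)| := by
  have h : ((((-1:ℚ⟮ρ⟯))^x * w : ℚ⟮ρ⟯) : ℝ) = (-1:ℝ)^x * (w:ℝ) := rfl
  rw [h, abs_mul]
  rcases Int.even_or_odd x with he | ho
  · rw [he.neg_one_zpow]; simp
  · rw [ho.neg_one_zpow]; simp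

theorem A_orbit (hρpos : (0:ℝ) < ρ) (σ : ℚ⟮ρ⟯ ≃ₐ[ℚ] ℚ⟮ρ⟯)
    (hσ : σ (rhoGen ρ) = -1 - (rhoGen ρ)⁻¹)
    (he0 : rhoGen ρ ≠ 0) (he1 : rhoGen ρ + 1 ≠ 0) (x y : ℤ) :
    |((rhoGen ρ ^ x * (1 + (rhoGen ρ)⁻¹) ^ y : ℚ⟮ρ⟯) : ℝ)| = ρ^x * (1+ρ⁻¹)^y ∧
    |((σ (rhoGen ρ ^ x * (1 + (rhoGen ρ)⁻¹) ^ y) : ℚ⟮ρ⟯) : ℝ)| = ρ^(-y) * (1+ρ⁻¹)^(x-y) ∧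
    |((σ (σ (rhoGen ρ ^ x * (1 + (rhoGen ρ)⁻¹) ^ y)) : ℚ⟮ρ⟯) : ℝ)|
      = ρ^(y-x) * (1+ρ⁻¹)^(-x) := by
  have hDv : (0:ℝ) < 1 + ρ⁻¹ := by positivity
  have hP : ∀ p q : ℤ, (0:ℝ) < ρ^p * (1+ρ⁻¹)^q :=
    fun p q => mul_pos (zpow_pos hρpos p) (zpow_pos hDv q)
  have hval : ∀ p q : ℤ, ((rhoGen ρ ^ p * (1 + (rhoGen ρ)⁻¹) ^ q : ℚ⟮ρ⟯) : ℝ)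
      = ρ^p * (1+ρ⁻¹)^q := fun p q => rfl
  refine ⟨?_, ?_, ?_⟩
  · rw [hval]; exact abs_of_pos (hP x y)
  · rw [sigma_zpow ρ σ hσ he0 he1, abs_neg_one_zpow_mul, hval]
    exact abs_of_pos (hP _ _)
  · rw [sigma_zpow ρ σ hσ he0 he1, map_mul, map_zpow₀, map_neg, map_one,
      sigma_zpow ρ σ hσ he0 he1, abs_neg_one_zpow_mul, abs_neg_one_zpow_mul, hval,
      show (-(x - y) : ℤ) = y - x from by ring, show (-y - (x - y) : ℤ) = -x from by ring]
    exact abs_of_pos (hP _ _)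

theorem core_pair (L D Z : ℝ) (x y : ℤ) (hD : 0 < D) (hDL : D < L) (hZ : 0 ≤ Z)
    (h1 : (x:ℝ)*L + (y:ℝ)*D ≤ Z) (h2 : -(y:ℝ)*L + ((x:ℝ)-(y:ℝ))*D ≤ Z)
    (h3 : ((y:ℝ)-(x:ℝ))*L - (x:ℝ)*D ≤ Z) :
    ((|x| ⊔ |y| : ℤ) : ℝ) * (L - D) ≤ 2*Z := by
  have hxy : ((|x| ⊔ |y| : ℤ) : ℝ) = max |(x:ℝ)| |(y:ℝ)| := by push_cast; rfl
  rw [hxy]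
  set xr := (x:ℝ); set yr := (y:ℝ)
  rcases le_total |yr| |xr| with hc | hc
  · rw [max_eq_left hc]
    rcases abs_cases xr with ⟨hx1, hx2⟩ | ⟨hx1, hx2⟩ <;> rw [hx1]
    · have hy : -xr ≤ yr := by
        nlinarith [neg_abs_le yr]
      nlinarith [mul_nonneg (by linarith : (0:ℝ) ≤ xr + yr) hD.le]
    · have hy : xr ≤ yr := by nlinarith [neg_abs_le yr]
      nlinarith [mul_nonneg (by linarith : (0:ℝ) ≤ yr - xr) hD.le]
  · rw [max_eq_right hc]
    rcases abs_cases yr with ⟨hy1, hy2⟩ | ⟨hy1, hy2⟩ <;> rw [hy1]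
    · have hx : xr ≤ yr := by nlinarith [le_abs_self xr]
      nlinarith [mul_nonneg (by linarith : (0:ℝ) ≤ 2*yr - xr) hD.le]
    · have hx : -yr ≥ xr := by nlinarith [le_abs_self xr]
      have hx2' : xr - 2*yr ≥ 0 := by nlinarith [neg_abs_le xr]
      nlinarith [mul_nonneg hx2' hD.le]

end

end GoodSol

end AuxiliaryLemmas

noncomputable section

set_option maxHeartbeats 1000000 in
/-- Let `a > 100` be an integer, `ρ` the largest real root of `f_a`
(so `a+1 < ρ < a+2`), `ε = ρ` and `δ = 1 + 1/ρ` (as elements of `K = ℚ(ρ) ⊆ ℝ`);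
by Thomas' theorem `ε, δ` form a fundamental system of units of `ℤ[ρ]`, i.e. every
unit of `ℤ[ρ]` equals `±ε^x·δ^y`. Then every solution `(u₁, u₂, n)` of the unit
equation is equivalent to a solution `(v₁, v₂, m)` with `v₁ = ε^{x₁}·δ^{y₁}`,
`v₂ = s·ε^{x₂}·δ^{y₂}`, `s ∈ {1,-1}`, and `|v₂| ≥ a^{X/2}` where
`X = max{|x₁|,|x₂|,|y₁|,|y₂|}`, with strict inequality whenever `X ≥ 1`. -/
theorem good_equivalent_solution (a : ℤ) (ha : 100 < a) (ρ : ℝ)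
    (hroot : ρ ^ 3 - (a : ℝ) * ρ ^ 2 - ((a : ℝ) + 3) * ρ - 1 = 0)
    (hρ₁ : (a : ℝ) + 1 < ρ) (hρ₂ : ρ < (a : ℝ) + 2)
    (hThomas : ∀ u : ℚ⟮ρ⟯, IsZrhoUnit ρ u → ∃ x y : ℤ,
      u = (rhoGen ρ) ^ x * (1 + (rhoGen ρ)⁻¹) ^ y ∨
      u = -((rhoGen ρ) ^ x * (1 + (rhoGen ρ)⁻¹) ^ y))
    (u₁ u₂ : ℚ⟮ρ⟯) (n : ℤ) (hsol : IsSolution a ρ u₁ u₂ n) :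
    ∃ (v₁ v₂ : ℚ⟮ρ⟯) (m : ℤ),
      IsSolution a ρ v₁ v₂ m ∧
      SolEquiv ρ (u₁, u₂, n) (v₁, v₂, m) ∧
      ∃ (x₁ y₁ x₂ y₂ : ℤ) (s : ℚ⟮ρ⟯), (s = 1 ∨ s = -1) ∧
        v₁ = (rhoGen ρ) ^ x₁ * (1 + (rhoGen ρ)⁻¹) ^ y₁ ∧
        v₂ = s * (rhoGen ρ) ^ x₂ * (1 + (rhoGen ρ)⁻¹) ^ y₂ ∧
        (a : ℝ) ^ (((|x₁| ⊔ |x₂| ⊔ |y₁| ⊔ |y₂| : ℤ) : ℝ) / 2) ≤ |(v₂ : ℝ)| ∧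
        (1 ≤ |x₁| ⊔ |x₂| ⊔ |y₁| ⊔ |y₂| →
          (a : ℝ) ^ (((|x₁| ⊔ |x₂| ⊔ |y₁| ⊔ |y₂| : ℤ) : ℝ) / 2) < |(v₂ : ℝ)|) := by
  classical
  have haR : (100:ℝ) < (a:ℝ) := by exact_mod_cast ha
  have hρpos : (0:ℝ) < ρ := by linarith
  have hcube := GoodSol.gen_cubic a ρ hroot
  have he0 : rhoGen ρ ≠ 0 := by
    rw [ne_eq, ← ZeroMemClass.coe_eq_zero]; show ¬ (ρ = 0); linarith
  have he1 : rhoGen ρ + 1 ≠ 0 := by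
    rw [ne_eq, ← ZeroMemClass.coe_eq_zero]; show ¬ (ρ + 1 = 0); linarith
  obtain ⟨σ, hσ⟩ := GoodSol.exists_sigma a ρ ha hρ₁ hroot
  have hσ3 := GoodSol.sigma_cubed a ρ hroot ha hρ₁ σ hσ
  -- choose an equivalent configuration whose second entry has the maximal absolute value
  -- among all Galois conjugates of both entries
  obtain ⟨w₁, w₂, hequiv, hsolw, hb1, hb2, hb3, hb4, hb5⟩ :
      ∃ w₁ w₂ : ℚ⟮ρ⟯, SolEquiv ρ (u₁, u₂, n) (w₁, w₂, n) ∧ IsSolution a ρ w₁ w₂ n ∧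
        |((w₁ : ℚ⟮ρ⟯) : ℝ)| ≤ |((w₂ : ℚ⟮ρ⟯) : ℝ)| ∧
        |((σ w₁ : ℚ⟮ρ⟯) : ℝ)| ≤ |((w₂ : ℚ⟮ρ⟯) : ℝ)| ∧
        |((σ (σ w₁) : ℚ⟮ρ⟯) : ℝ)| ≤ |((w₂ : ℚ⟮ρ⟯) : ℝ)| ∧
        |((σ w₂ : ℚ⟮ρ⟯) : ℝ)| ≤ |((w₂ : ℚ⟮ρ⟯) : ℝ)| ∧
        |((σ (σ w₂) : ℚ⟮ρ⟯) : ℝ)| ≤ |((w₂ : ℚ⟮ρ⟯) : ℝ)| := by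
    set A : ℚ⟮ρ⟯ → ℝ := fun z => |((z : ℚ⟮ρ⟯) : ℝ)| with hA
    set M : ℝ := ((A u₁ ⊔ A u₂) ⊔ (A (σ u₁) ⊔ A (σ u₂))) ⊔ (A (σ (σ u₁)) ⊔ A (σ (σ u₂)))
      with hM
    have l1 : A u₁ ≤ M := le_sup_of_le_left (le_sup_of_le_left le_sup_left)
    have l2 : A u₂ ≤ M := le_sup_of_le_left (le_sup_of_le_left le_sup_right)
    have l3 : A (σ u₁) ≤ M := le_sup_of_le_left (le_sup_of_le_right le_sup_left)
    have l4 : A (σ u₂) ≤ M := le_sup_of_le_left (le_sup_of_le_right le_sup_right)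
    have l5 : A (σ (σ u₁)) ≤ M := le_sup_of_le_right le_sup_left
    have l6 : A (σ (σ u₂)) ≤ M := le_sup_of_le_right le_sup_right
    have hs0 : IsSolution a ρ u₁ u₂ n := hsol
    have hs1 : IsSolution a ρ u₂ u₁ n := GoodSol.sol_swap a ρ hsol
    have hs2 : IsSolution a ρ (σ u₁) (σ u₂) n := GoodSol.sol_sigma a ρ σ hσ hcube hsol
    have hs3 : IsSolution a ρ (σ u₂) (σ u₁) n := GoodSol.sol_swap a ρ hs2
    have hs4 : IsSolution a ρ (σ (σ u₁)) (σ (σ u₂)) n := GoodSol.sol_sigma a ρ σ hσ hcube hs2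
    have hs5 : IsSolution a ρ (σ (σ u₂)) (σ (σ u₁)) n := GoodSol.sol_swap a ρ hs4
    have e0 : SolEquiv ρ (u₁, u₂, n) (u₁, u₂, n) := Relation.ReflTransGen.refl
    have e1 : SolEquiv ρ (u₁, u₂, n) (u₂, u₁, n) :=
      Relation.ReflTransGen.single (SolStep.swap u₁ u₂ n)
    have e2 : SolEquiv ρ (u₁, u₂, n) (σ u₁, σ u₂, n) :=
      Relation.ReflTransGen.single (SolStep.galois σ u₁ u₂ n)
    have e3 : SolEquiv ρ (u₁, u₂, n) (σ u₂, σ u₁, n) := e2.tail (SolStep.swap _ _ n)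
    have e4 : SolEquiv ρ (u₁, u₂, n) (σ (σ u₁), σ (σ u₂), n) :=
      e2.tail (SolStep.galois σ _ _ n)
    have e5 : SolEquiv ρ (u₁, u₂, n) (σ (σ u₂), σ (σ u₁), n) := e4.tail (SolStep.swap _ _ n)
    have h6 : M = A u₂ ∨ M = A u₁ ∨ M = A (σ u₂) ∨ M = A (σ u₁) ∨
        M = A (σ (σ u₂)) ∨ M = A (σ (σ u₁)) := by
      rcases max_choice ((A u₁ ⊔ A u₂) ⊔ (A (σ u₁) ⊔ A (σ u₂)))
        (A (σ (σ u₁)) ⊔ A (σ (σ u₂))) with h | h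
      · rcases max_choice (A u₁ ⊔ A u₂) (A (σ u₁) ⊔ A (σ u₂)) with h' | h'
        · rcases max_choice (A u₁) (A u₂) with h'' | h''
          · exact Or.inr (Or.inl (by rw [hM, h, h', h'']))
          · exact Or.inl (by rw [hM, h, h', h''])
        · rcases max_choice (A (σ u₁)) (A (σ u₂)) with h'' | h''
          · exact Or.inr (Or.inr (Or.inr (Or.inl (by rw [hM, h, h', h'']))))
          · exact Or.inr (Or.inr (Or.inl (by rw [hM, h, h', h''])))
      · rcases max_choice (A (σ (σ u₁))) (A (σ (σ u₂))) with h'' | h''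
        · exact Or.inr (Or.inr (Or.inr (Or.inr (Or.inr (by rw [hM, h, h''])))))
        · exact Or.inr (Or.inr (Or.inr (Or.inr (Or.inl (by rw [hM, h, h''])))))
    rcases h6 with hm | hm | hm | hm | hm | hm
    · exact ⟨u₁, u₂, e0, hs0, (l1.trans hm.le), (l3.trans hm.le), (l5.trans hm.le), (l4.trans hm.le), (l6.trans hm.le)⟩
    · refine ⟨u₂, u₁, e1, hs1, (l2.trans hm.le), (l4.trans hm.le), (l6.trans hm.le), (l3.trans hm.le), (l5.trans hm.le)⟩
    · refine ⟨σ u₁, σ u₂, e2, hs2, (l3.trans hm.le), (l5.trans hm.le), ?_, (l6.trans hm.le), ?_⟩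
      · show A (σ (σ (σ u₁))) ≤ A (σ u₂)
        rw [hσ3 u₁]; exact (l1.trans hm.le)
      · show A (σ (σ (σ u₂))) ≤ A (σ u₂)
        rw [hσ3 u₂]; exact (l2.trans hm.le)
    · refine ⟨σ u₂, σ u₁, e3, hs3, (l4.trans hm.le), (l6.trans hm.le), ?_, (l5.trans hm.le), ?_⟩
      · show A (σ (σ (σ u₂))) ≤ A (σ u₁)
        rw [hσ3 u₂]; exact (l2.trans hm.le)
      · show A (σ (σ (σ u₁))) ≤ A (σ u₁)
        rw [hσ3 u₁]; exact (l1.trans hm.le)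
    · refine ⟨σ (σ u₁), σ (σ u₂), e4, hs4, (l5.trans hm.le), ?_, ?_, ?_, ?_⟩
      · show A (σ (σ (σ u₁))) ≤ A (σ (σ u₂))
        rw [hσ3 u₁]; exact (l1.trans hm.le)
      · show A (σ (σ (σ (σ u₁)))) ≤ A (σ (σ u₂))
        rw [hσ3 (σ u₁)]; exact (l3.trans hm.le)
      · show A (σ (σ (σ u₂))) ≤ A (σ (σ u₂))
        rw [hσ3 u₂]; exact (l2.trans hm.le)
      · show A (σ (σ (σ (σ u₂)))) ≤ A (σ (σ u₂))
        rw [hσ3 (σ u₂)]; exact (l4.trans hm.le)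
    · refine ⟨σ (σ u₂), σ (σ u₁), e5, hs5, (l6.trans hm.le), ?_, ?_, ?_, ?_⟩
      · show A (σ (σ (σ u₂))) ≤ A (σ (σ u₁))
        rw [hσ3 u₂]; exact (l2.trans hm.le)
      · show A (σ (σ (σ (σ u₂)))) ≤ A (σ (σ u₁))
        rw [hσ3 (σ u₂)]; exact (l4.trans hm.le)
      · show A (σ (σ (σ u₁))) ≤ A (σ (σ u₁))
        rw [hσ3 u₁]; exact (l1.trans hm.le)
      · show A (σ (σ (σ (σ u₁)))) ≤ A (σ (σ u₁))
        rw [hσ3 (σ u₁)]; exact (l3.trans hm.le)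
  -- exponents of the two entries
  obtain ⟨x₁, y₁, hw₁⟩ := hThomas w₁ hsolw.1
  obtain ⟨x₂, y₂, hw₂⟩ := hThomas w₂ hsolw.2.1
  -- positivity and value facts
  have hDv : (0:ℝ) < 1 + ρ⁻¹ := by positivity
  have hP : ∀ p q : ℤ, (0:ℝ) < ρ^p * (1+ρ⁻¹)^q :=
    fun p q => mul_pos (zpow_pos hρpos p) (zpow_pos hDv q)
  have horb := fun (x y : ℤ) => GoodSol.A_orbit ρ hρpos σ hσ he0 he1 x y
  -- the absolute values of w₂ and its conjugates
  have hAneg : ∀ z : ℚ⟮ρ⟯, |((-z : ℚ⟮ρ⟯) : ℝ)| = |((z : ℚ⟮ρ⟯) : ℝ)| := by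
    intro z
    have : ((-z : ℚ⟮ρ⟯) : ℝ) = -(z : ℝ) := rfl
    rw [this, abs_neg]
  have hval : ∀ (w : ℚ⟮ρ⟯) (x y : ℤ),
      (w = rhoGen ρ ^ x * (1 + (rhoGen ρ)⁻¹) ^ y ∨
        w = -(rhoGen ρ ^ x * (1 + (rhoGen ρ)⁻¹) ^ y)) →
      |((w : ℚ⟮ρ⟯) : ℝ)| = ρ^x * (1+ρ⁻¹)^y ∧
      |((σ w : ℚ⟮ρ⟯) : ℝ)| = ρ^(-y) * (1+ρ⁻¹)^(x-y) ∧
      |((σ (σ w) : ℚ⟮ρ⟯) : ℝ)| = ρ^(y-x) * (1+ρ⁻¹)^(-x) := by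
    intro w x y hw
    rcases hw with rfl | rfl
    · exact horb x y
    · rw [map_neg, map_neg, hAneg, hAneg, hAneg]
      exact horb x y
  obtain ⟨hv1a, hv1b, hv1c⟩ := hval w₁ x₁ y₁ hw₁
  obtain ⟨hv2a, hv2b, hv2c⟩ := hval w₂ x₂ y₂ hw₂
  -- logarithmic inequalities
  set L : ℝ := Real.log ρ with hLdef
  set D : ℝ := Real.log (1 + ρ⁻¹) with hDdef
  have hlog : ∀ p q : ℤ, Real.log (ρ^p * (1+ρ⁻¹)^q) = (p:ℝ) * L + (q:ℝ) * D := by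
    intro p q
    rw [Real.log_mul (ne_of_gt (zpow_pos hρpos p)) (ne_of_gt (zpow_pos hDv q)),
      Real.log_zpow, Real.log_zpow]
  set Z : ℝ := (x₂:ℝ) * L + (y₂:ℝ) * D with hZdef
  have hZval : Real.log |((w₂ : ℚ⟮ρ⟯) : ℝ)| = Z := by rw [hv2a, hlog]
  have hlogle : ∀ (p q : ℤ) (t : ℝ), t = ρ^p * (1+ρ⁻¹)^q →
      t ≤ |((w₂ : ℚ⟮ρ⟯) : ℝ)| → (p:ℝ) * L + (q:ℝ) * D ≤ Z := by
    intro p q t ht hle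
    have := Real.log_le_log (by rw [ht]; exact hP p q) hle
    rw [hZval] at this
    rw [ht, hlog] at this
    exact this
  have i1 : (x₁:ℝ) * L + (y₁:ℝ) * D ≤ Z := hlogle x₁ y₁ _ hv1a hb1
  have i2 : ((-y₁ : ℤ):ℝ) * L + ((x₁ - y₁ : ℤ):ℝ) * D ≤ Z := hlogle _ _ _ hv1b hb2
  have i3 : ((y₁ - x₁ : ℤ):ℝ) * L + ((-x₁ : ℤ):ℝ) * D ≤ Z := hlogle _ _ _ hv1c hb3
  have i4 : (x₂:ℝ) * L + (y₂:ℝ) * D ≤ Z := le_of_eq rfl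
  have i5 : ((-y₂ : ℤ):ℝ) * L + ((x₂ - y₂ : ℤ):ℝ) * D ≤ Z := hlogle _ _ _ hv2b hb4
  have i6 : ((y₂ - x₂ : ℤ):ℝ) * L + ((-x₂ : ℤ):ℝ) * D ≤ Z := hlogle _ _ _ hv2c hb5
  push_cast at i2 i3 i5 i6
  have hDpos : 0 < D := Real.log_pos (by
    have : 0 < ρ⁻¹ := inv_pos.mpr hρpos
    linarith)
  have hinv1 : ρ⁻¹ < 1 := by
    rw [inv_lt_one_iff₀]; right; linarith
  have hDL : D < L := Real.log_lt_log hDv (by linarith)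
  have hZeq : Z = (x₂:ℝ) * L + (y₂:ℝ) * D := hZdef
  have hZ0 : 0 ≤ Z := by linarith only [i5, i6, hZeq]
  have hcp2 := GoodSol.core_pair L D Z x₂ y₂ hDpos hDL hZ0 i4 (by linarith only [i5]) (by linarith only [i6])
  have hcp1 := GoodSol.core_pair L D Z x₁ y₁ hDpos hDL hZ0 i1 (by linarith only [i2]) (by linarith only [i3])
  -- the global exponent bound
  set X : ℤ := |x₁| ⊔ |x₂| ⊔ |y₁| ⊔ |y₂| with hXdef
  have hXle : (X:ℝ) * (L - D) ≤ 2 * Z := by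
    have hXmax : X ≤ (|x₁| ⊔ |y₁|) ⊔ (|x₂| ⊔ |y₂|) := by
      rw [hXdef]
      refine sup_le (sup_le (sup_le ?_ ?_) ?_) ?_
      · exact le_sup_of_le_left le_sup_left
      · exact le_sup_of_le_right le_sup_left
      · exact le_sup_of_le_left le_sup_right
      · exact le_sup_of_le_right le_sup_right
    have hcast : (X:ℝ) ≤ (((|x₁| ⊔ |y₁|) ⊔ (|x₂| ⊔ |y₂|) : ℤ) : ℝ) := by exact_mod_cast hXmax
    have hLD : 0 ≤ L - D := by linarith
    calc (X:ℝ) * (L - D) ≤ (((|x₁| ⊔ |y₁|) ⊔ (|x₂| ⊔ |y₂|) : ℤ) : ℝ) * (L - D) :=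
          mul_le_mul_of_nonneg_right hcast hLD
      _ ≤ 2 * Z := by
          rcases max_choice (|x₁| ⊔ |y₁|) (|x₂| ⊔ |y₂|) with h | h <;> rw [h]
          · exact hcp1
          · exact hcp2
  have hX0 : (0:ℤ) ≤ X := le_trans (abs_nonneg x₁)
    (le_sup_of_le_left (le_sup_of_le_left le_sup_left))
  have hla : Real.log (a:ℝ) < L - D := by
    have hapos : (0:ℝ) < (a:ℝ) := by linarith
    have h1 : (a:ℝ) * (1 + ρ⁻¹) < ρ := by
      have h2 : (a:ℝ) * ρ⁻¹ < 1 := by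
        rw [← div_eq_mul_inv, div_lt_one hρpos]; linarith
      nlinarith
    have := Real.log_lt_log (by positivity) h1
    rw [Real.log_mul (ne_of_gt hapos) (ne_of_gt hDv)] at this
    rw [hLdef, hDdef]; linarith
  -- the two final bounds, stated for |w₂|
  have hw2pos : (0:ℝ) < |((w₂ : ℚ⟮ρ⟯) : ℝ)| := by rw [hv2a]; exact hP x₂ y₂
  have hbound1 : (a:ℝ) ^ (((X:ℤ):ℝ) / 2) ≤ |((w₂ : ℚ⟮ρ⟯) : ℝ)| := by
    rw [Real.rpow_def_of_pos (by linarith : (0:ℝ) < (a:ℝ))]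
    rw [← Real.exp_log hw2pos, hZval]
    apply Real.exp_le_exp.mpr
    have hX0' : (0:ℝ) ≤ (X:ℝ) := by exact_mod_cast hX0
    nlinarith [mul_le_mul_of_nonneg_right hla.le hX0']
  have hbound2 : 1 ≤ X → (a:ℝ) ^ (((X:ℤ):ℝ) / 2) < |((w₂ : ℚ⟮ρ⟯) : ℝ)| := by
    intro hX1
    rw [Real.rpow_def_of_pos (by linarith : (0:ℝ) < (a:ℝ))]
    rw [← Real.exp_log hw2pos, hZval]
    apply Real.exp_lt_exp.mpr
    have hX1' : (1:ℝ) ≤ (X:ℝ) := by exact_mod_cast hX1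
    nlinarith [mul_lt_mul_of_pos_right hla (by linarith : (0:ℝ) < (X:ℝ))]
  -- final assembly, normalising the sign of the first entry
  rcases hw₁ with hw₁' | hw₁'
  · -- w₁ already has positive sign
    refine ⟨w₁, w₂, n, hsolw, hequiv, x₁, y₁, x₂, y₂, ?_⟩
    rcases hw₂ with hw₂' | hw₂'
    · exact ⟨1, Or.inl rfl, hw₁', by rw [hw₂']; ring, hbound1, hbound2⟩
    · exact ⟨-1, Or.inr rfl, hw₁', by rw [hw₂']; ring, hbound1, hbound2⟩
  · -- negate the triple
    refine ⟨-w₁, -w₂, -n, GoodSol.sol_neg a ρ hsolw,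
      hequiv.tail (SolStep.neg w₁ w₂ n), x₁, y₁, x₂, y₂, ?_⟩
    have habs : |((-w₂ : ℚ⟮ρ⟯) : ℝ)| = |((w₂ : ℚ⟮ρ⟯) : ℝ)| := hAneg w₂
    rcases hw₂ with hw₂' | hw₂'
    · exact ⟨-1, Or.inr rfl, by rw [hw₁']; ring, by rw [hw₂']; ring,
        by rw [habs]; exact hbound1, by rw [habs]; exact hbound2⟩
    · exact ⟨1, Or.inl rfl, by rw [hw₁']; ring, by rw [hw₂']; ring,
        by rw [habs]; exact hbound1, by rw [habs]; exact hbound2⟩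


end
end

section
/- Let a > 100 be an integer and let (u₁, u₂, n) be a solution to the unit equation with u₁ = ε^{x₁}·δ^{y₁} and u₂ = s·ε^{x₂}·δ^{y₂} (s ∈ {1,-1}, integers x₁, y₁, x₂, y₂) such that x₁ = x₂ and y₁ - y₂ ∈ {0, 1, -1}. Then (u₁, u₂, n) is a trivial solution. -/
open IntermediateField

noncomputable section Aux

open Polynomial

def fa (a : ℤ) : ℚ[X] := X^3 - C (a:ℚ) * X^2 - C ((a:ℚ)+3) * X - 1

lemma fa_natDegree (a : ℤ) : (fa a).natDegree = 3 := by
  unfold fa; compute_degree!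

lemma fa_monic (a : ℤ) : (fa a).Monic := by
  unfold fa; monicity!

lemma fa_aeval_real (a : ℤ) (r : ℝ) : aeval r (fa a) = r^3 - (a:ℝ)*r^2 - ((a:ℝ)+3)*r - 1 := by
  simp [fa]

lemma fa_no_rat_root (a : ℤ) (ha : 100 < a) (r : ℚ) : ¬ (fa a).IsRoot r := by
  intro h
  have heq : r^3 - (a:ℚ)*r^2 - ((a:ℚ)+3)*r - 1 = 0 := by
    simpa [fa, IsRoot] using h
  have hint : IsIntegral ℤ r := by
    refine ⟨X^3 - C a * X^2 - C (a+3) * X - 1, by monicity!, ?_⟩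
    simp only [eval₂_sub, eval₂_mul, eval₂_pow, eval₂_X, eval₂_C, eval₂_one]
    simp only [Polynomial.eval₂_at_intCast, eq_intCast]
    push_cast
    linear_combination heq
  obtain ⟨z, rfl⟩ := IsIntegrallyClosed.isIntegral_iff.mp hint
  have hz : (z:ℚ)^3 - (a:ℚ)*(z:ℚ)^2 - ((a:ℚ)+3)*(z:ℚ) - 1 = 0 := by
    simpa using heq
  have hzz : z^3 - a*z^2 - (a+3)*z - 1 = 0 := by exact_mod_cast hz
  have hunit : IsUnit z := IsUnit.of_mul_eq_one (z^2 - a*z - (a+3)) (by linear_combination hzz)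
  rcases Int.isUnit_iff.mp hunit with rfl | rfl <;> (norm_num at hzz; omega)

lemma fa_irred (a : ℤ) (ha : 100 < a) : Irreducible (fa a) := by
  rw [(fa_monic a).irreducible_iff_roots_eq_zero_of_degree_le_three
    (by rw [fa_natDegree]; norm_num) (by rw [fa_natDegree])]
  rw [Multiset.eq_zero_iff_forall_notMem]
  intro r hr
  rw [mem_roots (fa_monic a).ne_zero] at hr
  exact fa_no_rat_root a ha r hr

lemma fa_minpoly (a : ℤ) (ha : 100 < a) (ρ : ℝ)
    (hroot : ρ ^ 3 - (a : ℝ) * ρ ^ 2 - ((a : ℝ) + 3) * ρ - 1 = 0) :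
    minpoly ℚ ρ = fa a :=
  (minpoly.eq_of_irreducible_of_monic (fa_irred a ha)
    (by rw [fa_aeval_real]; linear_combination hroot) (fa_monic a)).symm

lemma exists_emb (a : ℤ) (ha : 100 < a) (ρ : ℝ)
    (hroot : ρ ^ 3 - (a : ℝ) * ρ ^ 2 - ((a : ℝ) + 3) * ρ - 1 = 0)
    (r : ℝ) (hr : r ^ 3 - (a : ℝ) * r ^ 2 - ((a : ℝ) + 3) * r - 1 = 0) :
    ∃ e : ℚ⟮ρ⟯ →ₐ[ℚ] ℝ, e (rhoGen ρ) = r := by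
  have hint : IsIntegral ℚ ρ :=
    ⟨fa a, fa_monic a, by rw [← Polynomial.aeval_def, fa_aeval_real]; linear_combination hroot⟩
  set pb := IntermediateField.adjoin.powerBasis hint with hpb
  have hgen : pb.gen = rhoGen ρ := rfl
  have hmp : minpoly ℚ pb.gen = fa a := by
    rw [hgen]
    unfold rhoGen
    exact (IntermediateField.minpoly_gen ℚ ρ).trans (fa_minpoly a ha ρ hroot)
  have h0 : aeval r (minpoly ℚ pb.gen) = 0 := by
    rw [hmp, fa_aeval_real]; linear_combination hr
  exact ⟨pb.lift r h0, by rw [← hgen]; exact pb.lift_gen r h0⟩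

lemma emb_mul (ρ : ℝ) (e : ℚ⟮ρ⟯ →ₐ[ℚ] ℝ) (r : ℝ) (he : e (rhoGen ρ) = r)
    (hr0 : r ≠ 0) (x y : ℤ) :
    e ((rhoGen ρ) ^ x * (1 + (rhoGen ρ)⁻¹) ^ y) = r ^ (x - y) * (r + 1) ^ y := by
  rw [map_mul, map_zpow₀, map_zpow₀, map_add, map_one, map_inv₀, he]
  have h1 : (1 : ℝ) + r⁻¹ = (r + 1) * r⁻¹ := by field_simp
  rw [h1, mul_zpow, inv_zpow, ← zpow_neg, sub_eq_add_neg, zpow_add₀ hr0]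
  ring

end Aux

noncomputable section

lemma cube_eq (a : ℤ) (ha : 100 < a) (ρ : ℝ)
    (hroot : ρ ^ 3 - (a : ℝ) * ρ ^ 2 - ((a : ℝ) + 3) * ρ - 1 = 0)
    (hρ₁ : (a : ℝ) + 1 < ρ)
    (x y : ℤ) (C : ℚ⟮ρ⟯) (cf : ℝ → ℝ)
    (hC : ∀ (e : ℚ⟮ρ⟯ →ₐ[ℚ] ℝ) (r : ℝ), e (rhoGen ρ) = r → e C = cf r)
    (n : ℤ) (hKeq : (rhoGen ρ) ^ x * (1 + (rhoGen ρ)⁻¹) ^ y * C = (n : ℚ⟮ρ⟯)) :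
    ((n:ℝ) ^ 3 = (-1 : ℝ) ^ y * (cf ρ * cf (-(ρ+1)/ρ) * cf (-1/(ρ+1))))
      ∧ ρ ^ (x - y) * (ρ + 1) ^ y * cf ρ = (n : ℝ) := by
  have haR : (101 : ℝ) ≤ (a : ℝ) := by exact_mod_cast ha
  have hρpos : (0:ℝ) < ρ := by linarith
  have hρ0 : ρ ≠ 0 := ne_of_gt hρpos
  have hρ1pos : (0:ℝ) < ρ + 1 := by linarith
  have hρ1 : ρ + 1 ≠ 0 := ne_of_gt hρ1pos
  set ρ₂ : ℝ := -(ρ+1)/ρ with hρ₂def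
  set ρ₃ : ℝ := -1/(ρ+1) with hρ₃def
  have hρ₂neg : ρ₂ < 0 := div_neg_of_neg_of_pos (by linarith) hρpos
  have hρ₃neg : ρ₃ < 0 := div_neg_of_neg_of_pos (by norm_num) hρ1pos
  have hρ₂0 : ρ₂ ≠ 0 := ne_of_lt hρ₂neg
  have hρ₃0 : ρ₃ ≠ 0 := ne_of_lt hρ₃neg
  have hr₂ : ρ₂ ^ 3 - (a : ℝ) * ρ₂ ^ 2 - ((a : ℝ) + 3) * ρ₂ - 1 = 0 := by
    rw [hρ₂def]; field_simp; linear_combination hroot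
  have hr₃ : ρ₃ ^ 3 - (a : ℝ) * ρ₃ ^ 2 - ((a : ℝ) + 3) * ρ₃ - 1 = 0 := by
    rw [hρ₃def]; field_simp; linear_combination -hroot
  obtain ⟨e1, he1⟩ := exists_emb a ha ρ hroot ρ hroot
  obtain ⟨e2, he2⟩ := exists_emb a ha ρ hroot ρ₂ hr₂
  obtain ⟨e3, he3⟩ := exists_emb a ha ρ hroot ρ₃ hr₃
  have h1 : ρ ^ (x - y) * (ρ + 1) ^ y * cf ρ = (n : ℝ) := by
    have h := congrArg e1 hKeq
    rwa [map_mul, emb_mul ρ e1 ρ he1 hρ0, hC e1 ρ he1, map_intCast] at h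
  have h2 : ρ₂ ^ (x - y) * (ρ₂ + 1) ^ y * cf ρ₂ = (n : ℝ) := by
    have h := congrArg e2 hKeq
    rwa [map_mul, emb_mul ρ e2 ρ₂ he2 hρ₂0, hC e2 ρ₂ he2, map_intCast] at h
  have h3 : ρ₃ ^ (x - y) * (ρ₃ + 1) ^ y * cf ρ₃ = (n : ℝ) := by
    have h := congrArg e3 hKeq
    rwa [map_mul, emb_mul ρ e3 ρ₃ he3 hρ₃0, hC e3 ρ₃ he3, map_intCast] at h
  refine ⟨?_, h1⟩
  have hb1 : ρ * ρ₂ * ρ₃ = 1 := by rw [hρ₂def, hρ₃def]; field_simp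
  have hb2 : (ρ+1) * (ρ₂+1) * (ρ₃+1) = -1 := by rw [hρ₂def, hρ₃def]; field_simp; ring
  calc (n:ℝ)^3
      = (ρ ^ (x - y) * (ρ + 1) ^ y * cf ρ) * (ρ₂ ^ (x - y) * (ρ₂ + 1) ^ y * cf ρ₂)
        * (ρ₃ ^ (x - y) * (ρ₃ + 1) ^ y * cf ρ₃) := by rw [h1, h2, h3]; ring
    _ = (ρ * ρ₂ * ρ₃) ^ (x - y) * ((ρ+1) * (ρ₂+1) * (ρ₃+1)) ^ y
        * (cf ρ * cf ρ₂ * cf ρ₃) := by rw [mul_zpow, mul_zpow, mul_zpow, mul_zpow]; ring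
    _ = (-1 : ℝ) ^ y * (cf ρ * cf ρ₂ * cf ρ₃) := by rw [hb1, hb2, one_zpow, one_mul]

set_option maxHeartbeats 1000000 in
/-- Let `a > 100` be an integer, `ρ` the largest real root of `f_a`
(so `a+1 < ρ < a+2`), `ε = ρ` and `δ = 1 + 1/ρ` (as elements of `K = ℚ(ρ)`).
Any solution `(u₁, u₂, n)` of the unit equation with `u₁ = ε^{x₁}·δ^{y₁}`,
`u₂ = s·ε^{x₂}·δ^{y₂}`, `s ∈ {1,-1}`, `x₁ = x₂` and `y₁ - y₂ ∈ {0, 1, -1}`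
is a trivial solution. -/
theorem easy_special_case_trivial (a : ℤ) (ha : 100 < a) (ρ : ℝ)
    (hroot : ρ ^ 3 - (a : ℝ) * ρ ^ 2 - ((a : ℝ) + 3) * ρ - 1 = 0)
    (hρ₁ : (a : ℝ) + 1 < ρ) (hρ₂ : ρ < (a : ℝ) + 2)
    (u₁ u₂ : ℚ⟮ρ⟯) (n : ℤ) (hsol : IsSolution a ρ u₁ u₂ n)
    (x₁ y₁ x₂ y₂ : ℤ) (s : ℚ⟮ρ⟯) (hs : s = 1 ∨ s = -1)
    (hu₁ : u₁ = (rhoGen ρ) ^ x₁ * (1 + (rhoGen ρ)⁻¹) ^ y₁)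
    (hu₂ : u₂ = s * (rhoGen ρ) ^ x₂ * (1 + (rhoGen ρ)⁻¹) ^ y₂)
    (hx : x₁ = x₂) (hy : y₁ - y₂ = 0 ∨ y₁ - y₂ = 1 ∨ y₁ - y₂ = -1) :
    IsTrivialSolution ρ u₁ u₂ n := by
  subst hx
  obtain ⟨hunit₁, hunit₂, habs, hadd⟩ := hsol
  have haR : (101 : ℝ) ≤ (a : ℝ) := by exact_mod_cast ha
  have hρpos : (0:ℝ) < ρ := by linarith
  have hρ0 : ρ ≠ 0 := ne_of_gt hρpos
  have hρ1pos : (0:ℝ) < ρ + 1 := by linarith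
  have hρ1ne : ρ + 1 ≠ 0 := ne_of_gt hρ1pos
  have haa : (0:ℝ) ≤ (a:ℝ) := by linarith
  have hb : |(n:ℝ)|^3 ≤ (a:ℝ) := by
    calc |(n:ℝ)|^3 ≤ ((a:ℝ)^((1:ℝ)/3))^3 := pow_le_pow_left₀ (abs_nonneg _) habs 3
    _ = (a:ℝ) := by
        rw [← Real.rpow_natCast ((a:ℝ)^((1:ℝ)/3)) 3, ← Real.rpow_mul haa]
        norm_num
  have hnle : (n:ℝ)^3 ≤ (a:ℝ) := le_trans (by rw [← abs_pow]; exact le_abs_self _) hb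
  have hnge : -(a:ℝ) ≤ (n:ℝ)^3 := by
    have h := neg_abs_le ((n:ℝ)^3); rw [abs_pow] at h; linarith
  obtain ⟨e1, he1⟩ := exists_emb a ha ρ hroot ρ hroot
  have hinj : Function.Injective e1 := e1.toRingHom.injective
  have hDne : (1 + (rhoGen ρ)⁻¹) ≠ 0 := by
    intro h
    have h2 := congrArg e1 h
    rw [map_add, map_one, map_inv₀, he1, map_zero] at h2
    have h3 : (0:ℝ) < 1 + ρ⁻¹ := by positivity
    linarith
  rcases hy with hy0 | hy1 | hym1
  · -- y₁ = y₂
    have hyeq : y₂ = y₁ := by omega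
    subst hyeq
    rcases hs with hs1 | hsm1
    · -- s = 1 : u₂ = u₁, conclude (1,1,2)
      have huu : u₂ = u₁ := by rw [hu₁, hu₂, hs1]; ring
      have hKeq : (rhoGen ρ)^x₁ * (1+(rhoGen ρ)⁻¹)^y₂ * (2:ℚ⟮ρ⟯) = (n:ℚ⟮ρ⟯) := by
        rw [← hadd, huu, hu₁]; ring
      obtain ⟨key, h1⟩ := cube_eq a ha ρ hroot hρ₁ x₁ y₂ 2 (fun _ => (2:ℝ))
        (fun e r _ => by rw [map_ofNat]) n hKeq
      have hpos : (0:ℝ) < ρ^(x₁-y₂)*(ρ+1)^y₂*(2:ℝ) :=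
        mul_pos (mul_pos (zpow_pos hρpos _) (zpow_pos hρ1pos _)) two_pos
      have hnpos : (0:ℝ) < (n:ℝ) := by rw [← h1]; exact hpos
      have hn2 : n = 2 := by
        rcases Int.even_or_odd y₂ with hev | hod
        · rw [hev.neg_one_zpow, one_mul] at key
          have hcast : ((n:ℝ))^3 = ((2:ℝ))^3 := by rw [key]; norm_num
          have h8 : n^3 = 2^3 := by exact_mod_cast hcast
          exact (Odd.strictMono_pow (R := ℤ) ⟨1, by norm_num⟩).injective h8
        · rw [hod.neg_one_zpow] at key
          have hp3 : (0:ℝ) < (n:ℝ)^3 := pow_pos hnpos 3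
          nlinarith [key]
      subst hn2
      push_cast at h1
      have h1' : ρ^(x₁-y₂)*(ρ+1)^y₂ = 1 := by linarith
      have hphe : e1 u₁ = e1 1 := by
        rw [hu₁, emb_mul ρ e1 ρ he1 hρ0, map_one, h1']
      have hu1eq : u₁ = 1 := hinj hphe
      left
      rw [huu, hu1eq]
      exact Relation.ReflTransGen.refl
    · -- s = -1 : u₂ = -u₁, n = 0
      have huu : u₂ = -u₁ := by rw [hu₁, hu₂, hsm1]; ring
      have hn0 : (n:ℚ⟮ρ⟯) = 0 := by rw [← hadd, huu]; ring
      have hnr : (n:ℝ) = 0 := by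
        have h := congrArg e1 hn0; rwa [map_intCast, map_zero] at h
      have hn : n = 0 := by exact_mod_cast hnr
      subst hn
      right; left
      exact ⟨u₁, hunit₁, by rw [huu]; exact Relation.ReflTransGen.refl⟩
  · -- y₁ = y₂ + 1
    have hyeq : y₁ = y₂ + 1 := by omega
    subst hyeq
    rcases hs with hs1 | hsm1
    · -- s = 1 : impossible
      exfalso
      have hKeq : (rhoGen ρ)^x₁ * (1+(rhoGen ρ)⁻¹)^y₂ * ((1+(rhoGen ρ)⁻¹) + 1) = (n:ℚ⟮ρ⟯) := by
        rw [← hadd, hu₁, hu₂, hs1, zpow_add_one₀ hDne]; ring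
      obtain ⟨key, h1⟩ := cube_eq a ha ρ hroot hρ₁ x₁ y₂ _ (fun r => (1 + r⁻¹) + 1)
        (fun e r hr => by rw [map_add, map_add, map_one, map_inv₀, hr]) n hKeq
      have hm : (-1:ℝ) - ρ ≠ 0 := by linarith
      have hWlt : ((1+ρ⁻¹)+1) * ((1+(-(ρ+1)/ρ)⁻¹)+1) * ((1+(-1/(ρ+1))⁻¹)+1) < -(a:ℝ) := by
        have hexp : ((1+ρ⁻¹)+1) * ((1+(-(ρ+1)/ρ)⁻¹)+1) * ((1+(-1/(ρ+1))⁻¹)+1)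
            = -(((2*ρ+1)*(ρ+2)*(ρ-1))/(ρ*(ρ+1))) := by
          have f1 : (1+ρ⁻¹)+1 = (2*ρ+1)/ρ := by field_simp; ring
          have f2 : (1+(-(ρ+1)/ρ)⁻¹)+1 = (ρ+2)/(ρ+1) := by
            rw [inv_div, div_neg, eq_div_iff hρ1ne]
            field_simp
            ring
          have f3 : (1+(-1/(ρ+1))⁻¹)+1 = -(ρ-1) := by
            rw [inv_div]
            ring
          rw [f1, f2, f3]
          field_simp
        rw [hexp, neg_lt_neg_iff, lt_div_iff₀ (by positivity)]
        nlinarith [mul_lt_mul_of_pos_right (show (a:ℝ) < ρ - 1 by linarith)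
          (show (0:ℝ) < ρ*(ρ+1) by positivity), mul_pos hρpos hρ1pos]
      rcases Int.even_or_odd y₂ with hev | hod
      · rw [hev.neg_one_zpow, one_mul] at key
        linarith
      · rw [hod.neg_one_zpow] at key
        linarith
    · -- s = -1 : (ρ+1, -ρ, 1)
      have hKeq : (rhoGen ρ)^x₁ * (1+(rhoGen ρ)⁻¹)^y₂ * (rhoGen ρ)⁻¹ = (n:ℚ⟮ρ⟯) := by
        rw [← hadd, hu₁, hu₂, hsm1, zpow_add_one₀ hDne]; ring
      obtain ⟨key, h1⟩ := cube_eq a ha ρ hroot hρ₁ x₁ y₂ _ (fun r => r⁻¹)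
        (fun e r hr => by rw [map_inv₀, hr]) n hKeq
      have hW1 : ρ⁻¹ * (-(ρ+1)/ρ)⁻¹ * (-1/(ρ+1))⁻¹ = 1 := by field_simp
      rw [hW1] at key
      have hpos : (0:ℝ) < ρ^(x₁-y₂)*(ρ+1)^y₂*ρ⁻¹ :=
        mul_pos (mul_pos (zpow_pos hρpos _) (zpow_pos hρ1pos _)) (inv_pos.mpr hρpos)
      have hnpos : (0:ℝ) < (n:ℝ) := by rw [← h1]; exact hpos
      have hn1 : n = 1 := by
        rcases Int.even_or_odd y₂ with hev | hod
        · rw [hev.neg_one_zpow, one_mul] at key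
          have hcast : ((n:ℝ))^3 = ((1:ℝ))^3 := by rw [key]; norm_num
          have h8 : n^3 = 1^3 := by exact_mod_cast hcast
          exact (Odd.strictMono_pow (R := ℤ) ⟨1, by norm_num⟩).injective h8
        · rw [hod.neg_one_zpow] at key
          have hp3 : (0:ℝ) < (n:ℝ)^3 := pow_pos hnpos 3
          nlinarith [key]
      subst hn1
      push_cast at h1
      have h1' : ρ^(x₁-y₂)*(ρ+1)^y₂ = ρ := by
        have h2 : ρ^(x₁-y₂)*(ρ+1)^y₂*ρ⁻¹*ρ = 1*ρ := by rw [h1]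
        rw [mul_assoc _ ρ⁻¹ ρ, inv_mul_cancel₀ hρ0, mul_one, one_mul] at h2
        exact h2
      have hphe1 : e1 u₁ = e1 (rhoGen ρ + 1) := by
        rw [hu₁, emb_mul ρ e1 ρ he1 hρ0, map_add, map_one, he1,
          show x₁-(y₂+1) = (x₁-y₂) + (-1) by ring, zpow_add₀ hρ0, zpow_add_one₀ hρ1ne,
          zpow_neg_one]
        linear_combination ((ρ+1)*ρ⁻¹)*h1' + (ρ+1)*(mul_inv_cancel₀ hρ0)
      have hphe2 : e1 u₂ = e1 (-(rhoGen ρ)) := by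
        rw [hu₂, hsm1, show (-1:ℚ⟮ρ⟯) * (rhoGen ρ)^x₁ * (1+(rhoGen ρ)⁻¹)^y₂
          = -((rhoGen ρ)^x₁ * (1+(rhoGen ρ)⁻¹)^y₂) from by ring, map_neg, map_neg,
          emb_mul ρ e1 ρ he1 hρ0, he1, h1']
      right; right
      rw [hinj hphe1, hinj hphe2]
      exact Relation.ReflTransGen.refl
  · -- y₂ = y₁ + 1
    have hyeq : y₂ = y₁ + 1 := by omega
    subst hyeq
    rcases hs with hs1 | hsm1
    · -- s = 1 : impossible
      exfalso
      have hKeq : (rhoGen ρ)^x₁ * (1+(rhoGen ρ)⁻¹)^y₁ * ((1+(rhoGen ρ)⁻¹) + 1) = (n:ℚ⟮ρ⟯) := by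
        rw [← hadd, hu₁, hu₂, hs1, zpow_add_one₀ hDne]; ring
      obtain ⟨key, h1⟩ := cube_eq a ha ρ hroot hρ₁ x₁ y₁ _ (fun r => (1 + r⁻¹) + 1)
        (fun e r hr => by rw [map_add, map_add, map_one, map_inv₀, hr]) n hKeq
      have hm : (-1:ℝ) - ρ ≠ 0 := by linarith
      have hWlt : ((1+ρ⁻¹)+1) * ((1+(-(ρ+1)/ρ)⁻¹)+1) * ((1+(-1/(ρ+1))⁻¹)+1) < -(a:ℝ) := by
        have hexp : ((1+ρ⁻¹)+1) * ((1+(-(ρ+1)/ρ)⁻¹)+1) * ((1+(-1/(ρ+1))⁻¹)+1)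
            = -(((2*ρ+1)*(ρ+2)*(ρ-1))/(ρ*(ρ+1))) := by
          have f1 : (1+ρ⁻¹)+1 = (2*ρ+1)/ρ := by field_simp; ring
          have f2 : (1+(-(ρ+1)/ρ)⁻¹)+1 = (ρ+2)/(ρ+1) := by
            rw [inv_div, div_neg, eq_div_iff hρ1ne]
            field_simp
            ring
          have f3 : (1+(-1/(ρ+1))⁻¹)+1 = -(ρ-1) := by
            rw [inv_div]
            ring
          rw [f1, f2, f3]
          field_simp
        rw [hexp, neg_lt_neg_iff, lt_div_iff₀ (by positivity)]
        nlinarith [mul_lt_mul_of_pos_right (show (a:ℝ) < ρ - 1 by linarith)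
          (show (0:ℝ) < ρ*(ρ+1) by positivity), mul_pos hρpos hρ1pos]
      rcases Int.even_or_odd y₁ with hev | hod
      · rw [hev.neg_one_zpow, one_mul] at key
        linarith
      · rw [hod.neg_one_zpow] at key
        linarith
    · -- s = -1 : (ρ, -(ρ+1), -1)
      have hKeq : (rhoGen ρ)^x₁ * (1+(rhoGen ρ)⁻¹)^y₁ * (-(rhoGen ρ)⁻¹) = (n:ℚ⟮ρ⟯) := by
        rw [← hadd, hu₁, hu₂, hsm1, zpow_add_one₀ hDne]; ring
      obtain ⟨key, h1⟩ := cube_eq a ha ρ hroot hρ₁ x₁ y₁ _ (fun r => -r⁻¹)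
        (fun e r hr => by rw [map_neg, map_inv₀, hr]) n hKeq
      have hW1 : -ρ⁻¹ * -(-(ρ+1)/ρ)⁻¹ * -(-1/(ρ+1))⁻¹ = -1 := by field_simp
      rw [hW1] at key
      have hq : (0:ℝ) < ρ^(x₁-y₁)*(ρ+1)^y₁*ρ⁻¹ :=
        mul_pos (mul_pos (zpow_pos hρpos _) (zpow_pos hρ1pos _)) (inv_pos.mpr hρpos)
      have hneg : ρ^(x₁-y₁)*(ρ+1)^y₁*(-ρ⁻¹) < 0 := by
        have hid : ρ^(x₁-y₁)*(ρ+1)^y₁*(-ρ⁻¹) = -(ρ^(x₁-y₁)*(ρ+1)^y₁*ρ⁻¹) := by ring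
        rw [hid]; linarith
      have hnneg : (n:ℝ) < 0 := by rw [← h1]; exact hneg
      have hnm1 : n = -1 := by
        rcases Int.even_or_odd y₁ with hev | hod
        · rw [hev.neg_one_zpow, one_mul] at key
          have hcast : ((n:ℝ))^3 = ((-1:ℝ))^3 := by rw [key]; norm_num
          have h8 : n^3 = (-1)^3 := by exact_mod_cast hcast
          exact (Odd.strictMono_pow (R := ℤ) ⟨1, by norm_num⟩).injective h8
        · rw [hod.neg_one_zpow] at key
          norm_num at key
          have hp3 : (n:ℝ)^3 < 0 := Odd.pow_neg ⟨1, by norm_num⟩ hnneg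
          linarith
      subst hnm1
      push_cast at h1
      have h1'' : ρ^(x₁-y₁)*(ρ+1)^y₁*ρ⁻¹ = 1 := by linear_combination -h1
      have h1' : ρ^(x₁-y₁)*(ρ+1)^y₁ = ρ := by
        have h2 : ρ^(x₁-y₁)*(ρ+1)^y₁*ρ⁻¹*ρ = 1*ρ := by rw [h1'']
        rw [mul_assoc _ ρ⁻¹ ρ, inv_mul_cancel₀ hρ0, mul_one, one_mul] at h2
        exact h2
      have hphe1 : e1 u₁ = e1 (rhoGen ρ) := by
        rw [hu₁, emb_mul ρ e1 ρ he1 hρ0, he1, h1']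
      have hphe2 : e1 u₂ = e1 (-(rhoGen ρ + 1)) := by
        rw [hu₂, hsm1, show (-1:ℚ⟮ρ⟯) * (rhoGen ρ)^x₁ * (1+(rhoGen ρ)⁻¹)^(y₁+1)
          = -((rhoGen ρ)^x₁ * (1+(rhoGen ρ)⁻¹)^(y₁+1)) from by ring, map_neg, map_neg,
          emb_mul ρ e1 ρ he1 hρ0, map_add, map_one, he1,
          show x₁-(y₁+1) = (x₁-y₁) + (-1) by ring, zpow_add₀ hρ0, zpow_add_one₀ hρ1ne,
          zpow_neg_one]
        linear_combination -(((ρ+1)*ρ⁻¹)*h1' + (ρ+1)*(mul_inv_cancel₀ hρ0))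
      right; right
      rw [hinj hphe1, hinj hphe2]
      have s1 := SolStep.neg (ρ := ρ) (rhoGen ρ) (-(rhoGen ρ + 1)) (-1)
      simp only [neg_neg] at s1
      have s2 := SolStep.swap (ρ := ρ) (-(rhoGen ρ)) (rhoGen ρ + 1) 1
      exact Relation.ReflTransGen.head s1 (Relation.ReflTransGen.single s2)

end
end

section
/- Let a > 100 be an integer and let ρ₁, ρ₂, ρ₃ be the three real roots of f_a. Then for every integer x with x ∉ {0, 1, -1} and each sign s ∈ {1, -1}, the absolute value of the product (ρ₁^x + s)·(ρ₂^x + s)·(ρ₃^x + s) is strictly greater than a. (Equivalently, |N_{K/ℚ}(ε^x ± 1)| > a, where ε = ρ₁.) -/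
set_option maxHeartbeats 4000000

private lemma nlb_L1 {c r : ℝ} (hc : 1 < c) (hcr : c ≤ r) {x : ℤ} (hx : 2 ≤ x) :
    c ^ 2 ≤ r ^ x := by
  obtain ⟨n, rfl⟩ : ∃ n : ℕ, x = n := ⟨x.toNat, (Int.toNat_of_nonneg (by linarith)).symm⟩
  rw [zpow_natCast]
  have hn : 2 ≤ n := by exact_mod_cast hx
  calc c ^ 2 ≤ c ^ n := pow_le_pow_right₀ hc.le hn
    _ ≤ r ^ n := pow_le_pow_left₀ (by linarith) hcr n

private lemma nlb_L2 {c r : ℝ} (hc : 1 < c) (hcr : c ≤ r) {x : ℤ} (hx : x ≤ -2) :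
    r ^ x ≤ (c ^ 2)⁻¹ := by
  have h := nlb_L1 hc hcr (x := -x) (by linarith)
  have hr : (0:ℝ) < r := by linarith
  have hrx : r ^ x = (r ^ (-x))⁻¹ := by rw [← zpow_neg, neg_neg]
  rw [hrx]
  exact inv_anti₀ (by positivity) h

private lemma nlb_L3 {c r : ℝ} (hr : 0 < r) (hrc : r ≤ c) (hc : c < 1) {x : ℤ} (hx : 2 ≤ x) :
    r ^ x ≤ c ^ 2 := by
  obtain ⟨n, rfl⟩ : ∃ n : ℕ, x = n := ⟨x.toNat, (Int.toNat_of_nonneg (by linarith)).symm⟩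
  rw [zpow_natCast]
  have hn : 2 ≤ n := by exact_mod_cast hx
  calc r ^ n ≤ c ^ n := pow_le_pow_left₀ hr.le hrc n
    _ ≤ c ^ 2 := pow_le_pow_of_le_one (by linarith) hc.le hn

private lemma nlb_L4 {c r : ℝ} (hr : 0 < r) (hrc : r ≤ c) (hc : c < 1) {x : ℤ} (hx : x ≤ -2) :
    (c ^ 2)⁻¹ ≤ r ^ x := by
  have h := nlb_L3 hr hrc hc (x := -x) (by linarith)
  have hrx : r ^ x = (r ^ (-x))⁻¹ := by rw [← zpow_neg, neg_neg]
  rw [hrx]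
  exact inv_anti₀ (by positivity) h

private lemma nlb_abs_zpow (u : ℝ) (x : ℤ) : |u ^ x| = |u| ^ x := by
  obtain ⟨n, rfl | rfl⟩ := x.eq_nat_or_neg
  · rw [zpow_natCast, zpow_natCast, abs_pow]
  · rw [zpow_neg, zpow_neg, abs_inv, zpow_natCast, zpow_natCast, abs_pow]

private lemma nlb_inv_lt_one {c : ℝ} (hc : 1 < c) : c⁻¹ < 1 := by
  rw [← one_div, div_lt_one (by linarith)]; exact hc

private lemma nlb_numA (A : ℝ) (hA : 101 ≤ A) :
    A < ((A+1)^2 - 1) * ((1+1/(A+2))^2 - 1) * (1 - (1/(A+2))^2) := by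
  have h2 : (0:ℝ) < A + 2 := by linarith
  rw [show ((A+1)^2 - 1) * ((1+1/(A+2))^2 - 1) * (1 - (1/(A+2))^2)
    = A * ((2*(A+2)+1)*((A+2)^2-1)) / (A+2)^3 by field_simp; ring]
  rw [lt_div_iff₀ (by positivity)]
  have key : (A+2)^3 < (2*(A+2)+1)*((A+2)^2-1) := by nlinarith
  exact mul_lt_mul_of_pos_left key (by linarith)

private lemma nlb_numB (A : ℝ) (hA : 101 ≤ A) :
    A < (1 - ((A+1)^2)⁻¹) * (1 - ((1+1/(A+2))^2)⁻¹) * (((1/(A+2))^2)⁻¹ - 1) := by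
  have h1 : (0:ℝ) < A + 1 := by linarith
  have h2 : (0:ℝ) < A + 2 := by linarith
  have h3 : (0:ℝ) < A + 3 := by linarith
  have e0 : (1+1/(A+2)) = (A+3)/(A+2) := by field_simp; ring
  rw [e0]
  rw [show (1 - ((A+1)^2)⁻¹) * (1 - (((A+3)/(A+2))^2)⁻¹) * (((1/(A+2))^2)⁻¹ - 1)
    = (A*(A+2)) * (2*A+5) * ((A+2)^2-1) / ((A+1)^2 * (A+3)^2) by
      field_simp
      try ring
      try exact Or.inl trivial]
  rw [lt_div_iff₀ (by positivity)]
  have key : (A+1)^2 * (A+3)^2 < (A+2) * (2*A+5) * ((A+2)^2-1) := by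
    nlinarith [mul_pos h1 h3, mul_pos (mul_pos h1 h3) (show (0:ℝ) < A^2+5*A+7 by nlinarith)]
  calc A * ((A+1)^2 * (A+3)^2) < A * ((A+2) * (2*A+5) * ((A+2)^2-1)) :=
        mul_lt_mul_of_pos_left key (by linarith)
    _ = A*(A+2) * (2*A+5) * ((A+2)^2-1) := by ring

/-- Let `a > 100` be an integer and `ρ₁, ρ₂, ρ₃` the three real roots of `f_a`,
labelled so that `a+1 < ρ₁ < a+2`, `-1 - 1/(a+1) < ρ₂ < -1 - 1/(a+2)` and
`-1/(a+2) < ρ₃ < -1/(a+3)`. Then for every integer `x ∉ {0, 1, -1}` and each sign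
`s ∈ {1, -1}` we have `|(ρ₁^x + s)·(ρ₂^x + s)·(ρ₃^x + s)| > a`, i.e.
`|N_{K/ℚ}(ε^x ± 1)| > a` where `ε = ρ₁`. -/
theorem norm_lower_bound (a : ℤ) (ha : 100 < a) (ρ₁ ρ₂ ρ₃ : ℝ)
    (h₁ : ρ₁ ^ 3 - (a : ℝ) * ρ₁ ^ 2 - ((a : ℝ) + 3) * ρ₁ - 1 = 0)
    (h₂ : ρ₂ ^ 3 - (a : ℝ) * ρ₂ ^ 2 - ((a : ℝ) + 3) * ρ₂ - 1 = 0)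
    (h₃ : ρ₃ ^ 3 - (a : ℝ) * ρ₃ ^ 2 - ((a : ℝ) + 3) * ρ₃ - 1 = 0)
    (hb₁ : (a : ℝ) + 1 < ρ₁) (hb₁' : ρ₁ < (a : ℝ) + 2)
    (hb₂ : -1 - 1/((a : ℝ) + 1) < ρ₂) (hb₂' : ρ₂ < -1 - 1/((a : ℝ) + 2))
    (hb₃ : -1/((a : ℝ) + 2) < ρ₃) (hb₃' : ρ₃ < -1/((a : ℝ) + 3))
    (x : ℤ) (hx0 : x ≠ 0) (hx1 : x ≠ 1) (hx1' : x ≠ -1)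
    (s : ℝ) (hs : s = 1 ∨ s = -1) :
    (a : ℝ) < |(ρ₁ ^ x + s) * (ρ₂ ^ x + s) * (ρ₃ ^ x + s)| := by
  clear h₁ h₂ h₃
  set A : ℝ := (a : ℝ) with hAdef
  have hA : (101:ℝ) ≤ A := by
    rw [hAdef]
    exact_mod_cast (show (101:ℤ) ≤ a by omega)
  have h1pos : (0:ℝ) < A + 1 := by linarith
  have h2pos : (0:ℝ) < A + 2 := by linarith
  have h3pos : (0:ℝ) < A + 3 := by linarith
  have hinv2 : 0 < 1/(A+2) := by positivity
  have hinv3 : 0 < 1/(A+3) := by positivity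
  -- the key per-factor absolute value lower bound
  have hs1 : |(-s)| = 1 := by rcases hs with h | h <;> simp [h]
  have habs : ∀ u : ℝ, |(|u| - 1)| ≤ |u + s| := by
    intro u
    calc |(|u| - 1)| = |(|u| - |(-s)|)| := by rw [hs1]
      _ ≤ |u - (-s)| := abs_abs_sub_abs_le_abs_sub u (-s)
      _ = |u + s| := by ring_nf
  have key : ∀ u : ℝ, |(|u| ^ x - 1)| ≤ |u ^ x + s| := by
    intro u
    have := habs (u ^ x)
    rwa [nlb_abs_zpow] at this
  -- bounds on the absolute values of the roots
  have r1a : A + 1 ≤ |ρ₁| := by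
    rw [abs_of_pos (by linarith)]; linarith
  have r2neg : ρ₂ < 0 := by linarith
  have r2a : 1 + 1/(A+2) ≤ |ρ₂| := by
    rw [abs_of_neg r2neg]; linarith
  have e3' : -1/(A+3) = -(1/(A+3)) := by ring
  have e2' : -1/(A+2) = -(1/(A+2)) := by ring
  have r3neg : ρ₃ < 0 := by rw [e3'] at hb₃'; linarith
  have r3pos : 0 < |ρ₃| := abs_pos.mpr (by linarith)
  have r3a : |ρ₃| ≤ 1/(A+2) := by
    rw [abs_of_neg r3neg]; rw [e2'] at hb₃; linarith
  have r3c : 1/(A+2) < 1 := by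
    rw [div_lt_one h2pos]; linarith
  have r1c : (1:ℝ) < A + 1 := by linarith
  have r2c : (1:ℝ) < 1 + 1/(A+2) := by linarith
  -- split on the sign of x
  have hxcases : 2 ≤ x ∨ x ≤ -2 := by omega
  have prodabs : |(ρ₁ ^ x + s) * (ρ₂ ^ x + s) * (ρ₃ ^ x + s)|
      = |ρ₁ ^ x + s| * |ρ₂ ^ x + s| * |ρ₃ ^ x + s| := by
    rw [abs_mul, abs_mul]
  rcases hxcases with hx | hx
  · -- x ≥ 2
    have b1 : (A+1)^2 ≤ |ρ₁| ^ x := nlb_L1 r1c r1a hx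
    have b2 : (1+1/(A+2))^2 ≤ |ρ₂| ^ x := nlb_L1 r2c r2a hx
    have b3 : |ρ₃| ^ x ≤ (1/(A+2))^2 := nlb_L3 r3pos r3a r3c hx
    have sq1 : (1:ℝ) < (A+1)^2 := by nlinarith
    have sq2 : (1:ℝ) < (1+1/(A+2))^2 := by nlinarith
    have sq3 : (1/(A+2))^2 < 1 := by nlinarith
    have f1 : (A+1)^2 - 1 ≤ |(|ρ₁| ^ x - 1)| := by
      rw [abs_of_pos (by linarith)]; linarith
    have f2 : (1+1/(A+2))^2 - 1 ≤ |(|ρ₂| ^ x - 1)| := by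
      rw [abs_of_pos (by linarith)]; linarith
    have f3 : 1 - (1/(A+2))^2 ≤ |(|ρ₃| ^ x - 1)| := by
      rw [abs_of_nonpos (by linarith)]; linarith
    have c1n : (0:ℝ) ≤ (A+1)^2 - 1 := by linarith
    have c2n : (0:ℝ) ≤ (1+1/(A+2))^2 - 1 := by linarith
    have c3n : (0:ℝ) ≤ 1 - (1/(A+2))^2 := by linarith
    calc A < ((A+1)^2 - 1) * ((1+1/(A+2))^2 - 1) * (1 - (1/(A+2))^2) := nlb_numA A hA
      _ ≤ |(|ρ₁| ^ x - 1)| * |(|ρ₂| ^ x - 1)| * |(|ρ₃| ^ x - 1)| := by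
          apply mul_le_mul (mul_le_mul f1 f2 c2n (abs_nonneg _)) f3 c3n (by positivity)
      _ ≤ |ρ₁ ^ x + s| * |ρ₂ ^ x + s| * |ρ₃ ^ x + s| := by
          apply mul_le_mul (mul_le_mul (key ρ₁) (key ρ₂) (abs_nonneg _) (abs_nonneg _))
            (key ρ₃) (abs_nonneg _) (by positivity)
      _ = |(ρ₁ ^ x + s) * (ρ₂ ^ x + s) * (ρ₃ ^ x + s)| := prodabs.symm
  · -- x ≤ -2
    have b1 : |ρ₁| ^ x ≤ ((A+1)^2)⁻¹ := nlb_L2 r1c r1a hx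
    have b2 : |ρ₂| ^ x ≤ ((1+1/(A+2))^2)⁻¹ := nlb_L2 r2c r2a hx
    have b3 : ((1/(A+2))^2)⁻¹ ≤ |ρ₃| ^ x := nlb_L4 r3pos r3a r3c hx
    have sq1 : (1:ℝ) < (A+1)^2 := by nlinarith
    have sq2 : (1:ℝ) < (1+1/(A+2))^2 := by nlinarith
    have sq3 : (1/(A+2))^2 < 1 := by nlinarith
    have i1 : ((A+1)^2)⁻¹ < 1 := nlb_inv_lt_one sq1
    have i2 : ((1+1/(A+2))^2)⁻¹ < 1 := nlb_inv_lt_one sq2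
    have i3 : (1:ℝ) < ((1/(A+2))^2)⁻¹ := by
      rw [show ((1/(A+2))^2)⁻¹ = (A+2)^2 by field_simp]
      nlinarith
    have f1 : 1 - ((A+1)^2)⁻¹ ≤ |(|ρ₁| ^ x - 1)| := by
      rw [abs_of_nonpos (by linarith)]; linarith
    have f2 : 1 - ((1+1/(A+2))^2)⁻¹ ≤ |(|ρ₂| ^ x - 1)| := by
      rw [abs_of_nonpos (by linarith)]; linarith
    have f3 : ((1/(A+2))^2)⁻¹ - 1 ≤ |(|ρ₃| ^ x - 1)| := by
      rw [abs_of_pos (by linarith)]; linarith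
    have c1n : (0:ℝ) ≤ 1 - ((A+1)^2)⁻¹ := by linarith
    have c2n : (0:ℝ) ≤ 1 - ((1+1/(A+2))^2)⁻¹ := by linarith
    have c3n : (0:ℝ) ≤ ((1/(A+2))^2)⁻¹ - 1 := by linarith
    calc A < (1 - ((A+1)^2)⁻¹) * (1 - ((1+1/(A+2))^2)⁻¹) * (((1/(A+2))^2)⁻¹ - 1) :=
          nlb_numB A hA
      _ ≤ |(|ρ₁| ^ x - 1)| * |(|ρ₂| ^ x - 1)| * |(|ρ₃| ^ x - 1)| := by
          apply mul_le_mul (mul_le_mul f1 f2 c2n (abs_nonneg _)) f3 c3n (by positivity)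
      _ ≤ |ρ₁ ^ x + s| * |ρ₂ ^ x + s| * |ρ₃ ^ x + s| := by
          apply mul_le_mul (mul_le_mul (key ρ₁) (key ρ₂) (abs_nonneg _) (abs_nonneg _))
            (key ρ₃) (abs_nonneg _) (by positivity)
      _ = |(ρ₁ ^ x + s) * (ρ₂ ^ x + s) * (ρ₃ ^ x + s)| := prodabs.symm
end

section
/- Let a > 100 be an integer and let (u₁, u₂, n) be a solution to the unit equation with u₁ = ε^{x₁}·δ^{y₁}, u₂ = s·ε^{x₂}·δ^{y₂} (s ∈ {1,-1}), x₁ ≠ x₂, and |u₂| > a^{X/2} where X := max{|x₁|, |x₂|, |y₁|, |y₂|}. Then X > (1/2)·(a+2)·(log(a+1) - log 2). -/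
lemma taylor_log_aux (t : ℝ) (h : 0 < t) (h2 : t ≤ 1/100) :
    (1+t) * Real.log (1+t) ≤ t * (1 + t/2) := by
  have h1 : |(-t)| < 1 := by rw [abs_neg, abs_of_pos h]; linarith
  have key := Real.abs_log_sub_add_sum_range_le h1 3
  simp [Finset.sum_range_succ] at key
  rw [abs_of_pos h, abs_le] at key
  have hlog : Real.log (1+t) ≤ t - t^2/2 + t^3/3 + 2*t^4 := by
    have ht4 : t^4/(1-t) ≤ 2*t^4 := by
      rw [div_le_iff₀ (by linarith)]
      have : 0 ≤ t^4 * (1 - 2*t) := mul_nonneg (by positivity) (by linarith)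
      nlinarith
    nlinarith [key.2]
  have hmul : (1+t) * Real.log (1+t) ≤ (1+t) * (t - t^2/2 + t^3/3 + 2*t^4) :=
    mul_le_mul_of_nonneg_left hlog (by linarith)
  have hpoly : (1+t) * (t - t^2/2 + t^3/3 + 2*t^4) ≤ t * (1 + t/2) := by
    have h3 : 0 ≤ t^3 * (1/6 - (7/3)*t - 2*t^2) := mul_nonneg (by positivity) (by nlinarith)
    nlinarith
  linarith

lemma log_div_mono_aux (x : ℝ) (hx : 102 ≤ x) : 102 * Real.log x ≤ x * Real.log 102 := by
  have h0 : (0:ℝ) < x := by linarith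
  have h1 : Real.log (x/102) ≤ x/102 - 1 := Real.log_le_sub_one_of_pos (by positivity)
  rw [Real.log_div (ne_of_gt h0) (by norm_num)] at h1
  have h2 : (1:ℝ) ≤ Real.log 102 := by
    have he : Real.exp 1 ≤ 102 := by
      have := Real.exp_one_lt_d9
      linarith
    calc (1:ℝ) = Real.log (Real.exp 1) := (Real.log_exp 1).symm
    _ ≤ Real.log 102 := Real.log_le_log (Real.exp_pos 1) he
  nlinarith [h1, h2, hx]

set_option maxHeartbeats 1000000 in
/-- Let `a > 100` be an integer, `ρ` the largest real root of `f_a`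
(so `a+1 < ρ < a+2`), `ε = ρ` and `δ = 1 + 1/ρ`. Let `(u₁, u₂, n)` be a solution of
the unit equation with `u₁ = ε^{x₁}·δ^{y₁}`, `u₂ = s·ε^{x₂}·δ^{y₂}` (`s ∈ {1,-1}`),
`x₁ ≠ x₂` and `|u₂| > a^{X/2}` where `X := max{|x₁|,|x₂|,|y₁|,|y₂|}`. Then
`X > (1/2)·(a+2)·(log(a+1) - log 2)`. -/
theorem exponent_lower_bound (a : ℤ) (ha : 100 < a) (ρ : ℝ)
    (hroot : ρ ^ 3 - (a : ℝ) * ρ ^ 2 - ((a : ℝ) + 3) * ρ - 1 = 0)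
    (hρ₁ : (a : ℝ) + 1 < ρ) (hρ₂ : ρ < (a : ℝ) + 2)
    (u₁ u₂ : ℝ) (n : ℤ) (x₁ y₁ x₂ y₂ : ℤ) (s : ℝ) (hs : s = 1 ∨ s = -1)
    (hu₁ : u₁ = ρ ^ x₁ * (1 + ρ⁻¹) ^ y₁)
    (hu₂ : u₂ = s * ρ ^ x₂ * (1 + ρ⁻¹) ^ y₂)
    (hsum : u₁ + u₂ = (n : ℝ))
    (hn : |(n : ℝ)| ≤ (a : ℝ) ^ ((1 : ℝ) / 3))
    (hx : x₁ ≠ x₂)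
    (X : ℤ) (hXdef : X = |x₁| ⊔ |x₂| ⊔ |y₁| ⊔ |y₂|)
    (hbig : (a : ℝ) ^ ((X : ℝ) / 2) < |u₂|) :
    (X : ℝ) > (1 / 2) * ((a : ℝ) + 2) * (Real.log ((a : ℝ) + 1) - Real.log 2) := by
  have ha1 : (101:ℝ) ≤ (a:ℝ) := by exact_mod_cast ha
  have ha0 : (0:ℝ) < (a:ℝ) := by linarith
  have haR : (1:ℝ) < (a:ℝ) := by linarith
  have hρ0 : 0 < ρ := by linarith
  set δ : ℝ := 1 + ρ⁻¹ with hδdef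
  have hδ1 : 1 < δ := by
    have : 0 < ρ⁻¹ := inv_pos.mpr hρ0
    simp only [hδdef]; linarith
  have hδ0 : 0 < δ := by linarith
  -- bounds from hXdef
  have hXx1 : |x₁| ≤ X := by rw [hXdef]; exact le_trans (le_trans le_sup_left le_sup_left) le_sup_left
  have hXx2 : |x₂| ≤ X := by rw [hXdef]; exact le_trans (le_trans le_sup_right le_sup_left) le_sup_left
  have hXy1 : |y₁| ≤ X := by rw [hXdef]; exact le_trans le_sup_right le_sup_left
  have hXy2 : |y₂| ≤ X := by rw [hXdef]; exact le_sup_right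
  have hX1 : 1 ≤ X := by
    by_contra hc
    push_neg at hc
    have hx1 : x₁ = 0 := abs_nonpos_iff.mp (by omega)
    have hx2 : x₂ = 0 := abs_nonpos_iff.mp (by omega)
    exact hx (hx1.trans hx2.symm)
  have hX1R : (1:ℝ) ≤ (X:ℝ) := by exact_mod_cast hX1
  -- positivity of u₁ and B
  have hu₁pos : 0 < u₁ := by
    rw [hu₁]
    exact mul_pos (zpow_pos hρ0 _) (zpow_pos hδ0 _)
  set B : ℝ := ρ ^ x₂ * δ ^ y₂ with hBdef
  have hBpos : 0 < B := mul_pos (zpow_pos hρ0 _) (zpow_pos hδ0 _)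
  -- τ := a^(-1/6)
  set τ : ℝ := (a:ℝ) ^ (-(1/6) : ℝ) with hτdef
  have hτpos : 0 < τ := Real.rpow_pos_of_pos ha0 _
  have hτle : τ ≤ 47/100 := by
    have h6 : ((100/47:ℝ)) ^ (6:ℕ) ≤ (a:ℝ) := by
      calc ((100/47:ℝ)) ^ (6:ℕ) ≤ 101 := by norm_num
      _ ≤ (a:ℝ) := ha1
    have h16 : (100/47 : ℝ) ≤ (a:ℝ) ^ ((1:ℝ)/6) := by
      have hr := Real.rpow_le_rpow (by positivity) h6 (by norm_num : (0:ℝ) ≤ 1/6)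
      rwa [← Real.rpow_natCast (100/47:ℝ) 6, ← Real.rpow_mul (by norm_num : (0:ℝ) ≤ 100/47),
        show ((6:ℕ):ℝ) * (1/6) = 1 by norm_num, Real.rpow_one] at hr
    have hτeq : τ = ((a:ℝ) ^ ((1:ℝ)/6))⁻¹ := by
      rw [hτdef, Real.rpow_neg ha0.le]
    rw [hτeq, show (47:ℝ)/100 = ((100:ℝ)/47)⁻¹ by norm_num]
    exact inv_anti₀ (by norm_num) h16
  -- exponent comparisons
  have hpow2 : (a:ℝ)^((1:ℝ)/3) ≤ (a:ℝ)^((X:ℝ)/2) :=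
    (Real.rpow_le_rpow_left_iff haR).2 (by linarith)
  have hpow : (a:ℝ)^((1:ℝ)/3) ≤ (a:ℝ)^((X:ℝ)/2) * τ := by
    rw [hτdef, ← Real.rpow_add ha0]
    exact (Real.rpow_le_rpow_left_iff haR).2 (by linarith)
  -- s = -1
  have hs' : s = -1 := by
    rcases hs with hs1 | hs1
    · exfalso
      have hu₂pos : 0 < u₂ := by
        rw [hu₂, hs1, one_mul]
        exact mul_pos (zpow_pos hρ0 _) (zpow_pos hδ0 _)
      have habs : |u₂| = u₂ := abs_of_pos hu₂pos
      have hle := le_abs_self ((n:ℝ))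
      rw [habs] at hbig
      linarith
    · exact hs1
  have hu₂' : u₂ = -B := by rw [hu₂, hs', hBdef]; ring
  have hBbig : (a:ℝ)^((X:ℝ)/2) < B := by
    rwa [hu₂', abs_neg, abs_of_pos hBpos] at hbig
  -- |n| < B * τ
  have hnB : |(n:ℝ)| < B * τ := by
    have hstep : (a:ℝ)^((X:ℝ)/2) * τ < B * τ := mul_lt_mul_of_pos_right hBbig hτpos
    linarith [hn.trans hpow]
  -- u₁ = n + B and bounds
  have hu₁eq : u₁ = (n:ℝ) + B := by
    rw [hu₂'] at hsum; linarith
  have hnabs1 : (n:ℝ) ≤ |(n:ℝ)| := le_abs_self _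
  have hnabs2 : -(n:ℝ) ≤ |(n:ℝ)| := neg_le_abs _
  have hub : u₁ ≤ B * (1+τ) := by
    rw [hu₁eq]
    have hr : B * (1+τ) = B + B * τ := by ring
    rw [hr]; linarith
  have hlb : B * (1-τ) ≤ u₁ := by
    rw [hu₁eq]
    have hr : B * (1-τ) = B - B * τ := by ring
    rw [hr]; linarith
  have h1τpos : 0 < 1 - τ := by linarith
  -- logs
  have hlogδ0 : 0 ≤ Real.log δ := Real.log_nonneg hδ1.le
  have hlogu₁ : Real.log u₁ = (x₁:ℝ) * Real.log ρ + (y₁:ℝ) * Real.log δ := by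
    rw [hu₁, Real.log_mul (zpow_ne_zero _ (ne_of_gt hρ0)) (zpow_ne_zero _ (ne_of_gt hδ0)),
      Real.log_zpow, Real.log_zpow]
  have hlogB : Real.log B = (x₂:ℝ) * Real.log ρ + (y₂:ℝ) * Real.log δ := by
    rw [hBdef, Real.log_mul (zpow_ne_zero _ (ne_of_gt hρ0)) (zpow_ne_zero _ (ne_of_gt hδ0)),
      Real.log_zpow, Real.log_zpow]
  set E : ℝ := -Real.log (1 - τ) with hEdef
  -- |log(u₁) - log(B)| ≤ E
  have hΛub : Real.log u₁ - Real.log B ≤ E := by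
    have h1 : Real.log u₁ ≤ Real.log (B*(1+τ)) :=
      Real.log_le_log hu₁pos hub
    rw [Real.log_mul (ne_of_gt hBpos) (ne_of_gt (by linarith : (0:ℝ) < 1+τ))] at h1
    have h2 : Real.log (1+τ) ≤ -Real.log (1-τ) := by
      have hle1 : (1-τ)*(1+τ) ≤ 1 := by
        have hr : (1-τ)*(1+τ) = 1 - τ*τ := by ring
        rw [hr]
        linarith [mul_nonneg hτpos.le hτpos.le]
      have h0 : 0 ≤ (1-τ)*(1+τ) := mul_nonneg h1τpos.le (by linarith)
      have := Real.log_nonpos h0 hle1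
      rw [Real.log_mul (ne_of_gt h1τpos) (ne_of_gt (by linarith : (0:ℝ) < 1+τ))] at this
      linarith
    rw [hEdef]; linarith
  have hΛlb : -E ≤ Real.log u₁ - Real.log B := by
    have h1 : Real.log (B*(1-τ)) ≤ Real.log u₁ :=
      Real.log_le_log (mul_pos hBpos h1τpos) hlb
    rw [Real.log_mul (ne_of_gt hBpos) (ne_of_gt h1τpos)] at h1
    rw [hEdef]; linarith
  -- key inequality : log ρ - E ≤ 2X log δ
  have hlogρpos : 0 < Real.log ρ := Real.log_pos (by linarith)
  have hD1 : (1:ℝ) ≤ |(x₁:ℝ) - (x₂:ℝ)| := by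
    have h1 : (1:ℤ) ≤ |x₁ - x₂| := Int.one_le_abs (sub_ne_zero.mpr hx)
    exact_mod_cast h1
  have hM2X : |(y₁:ℝ) - (y₂:ℝ)| ≤ 2*(X:ℝ) := by
    have h1 : |y₁ - y₂| ≤ 2*X := le_trans (abs_sub y₁ y₂) (by linarith)
    exact_mod_cast h1
  have hΛ : |((x₁:ℝ) - x₂) * Real.log ρ + ((y₁:ℝ) - y₂) * Real.log δ| ≤ E := by
    have heq : Real.log u₁ - Real.log B
        = ((x₁:ℝ) - x₂) * Real.log ρ + ((y₁:ℝ) - y₂) * Real.log δ := by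
      rw [hlogu₁, hlogB]; ring
    rw [← heq, abs_le]; exact ⟨hΛlb, hΛub⟩
  have hkey : Real.log ρ - E ≤ 2*(X:ℝ) * Real.log δ := by
    have htri : |((x₁:ℝ) - x₂) * Real.log ρ|
        ≤ E + |((y₁:ℝ) - y₂) * Real.log δ| := by
      have h := abs_add_le (((x₁:ℝ) - x₂) * Real.log ρ + ((y₁:ℝ) - y₂) * Real.log δ)
        (-(((y₁:ℝ) - y₂) * Real.log δ))
      rw [abs_neg] at h
      have heq2 : ((x₁:ℝ) - x₂) * Real.log ρ + ((y₁:ℝ) - y₂) * Real.log δ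
          + -(((y₁:ℝ) - y₂) * Real.log δ) = ((x₁:ℝ) - x₂) * Real.log ρ := by ring
      rw [heq2] at h
      linarith [hΛ]
    have e1 : |((x₁:ℝ) - x₂) * Real.log ρ| = |(x₁:ℝ) - x₂| * Real.log ρ := by
      rw [abs_mul, abs_of_pos hlogρpos]
    have e2 : |((y₁:ℝ) - y₂) * Real.log δ| = |(y₁:ℝ) - y₂| * Real.log δ := by
      rw [abs_mul, abs_of_nonneg hlogδ0]
    have h3 : Real.log ρ ≤ |(x₁:ℝ) - x₂| * Real.log ρ :=
      le_mul_of_one_le_left hlogρpos.le hD1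
    have h4 : |(y₁:ℝ) - y₂| * Real.log δ ≤ 2*(X:ℝ) * Real.log δ :=
      mul_le_mul_of_nonneg_right hM2X hlogδ0
    rw [e1, e2] at htri
    linarith
  -- switch to t := 1/(a+1)
  set L : ℝ := Real.log ((a:ℝ)+1) with hLdef
  have hlogρL : L ≤ Real.log ρ := Real.log_le_log (by linarith) (le_of_lt hρ₁)
  set t : ℝ := ((a:ℝ)+1)⁻¹ with htdef
  have htpos : 0 < t := by
    rw [htdef]; exact inv_pos.mpr (by linarith)
  have ht100 : t ≤ 1/100 := by
    rw [htdef, show (1:ℝ)/100 = ((100:ℝ))⁻¹ by norm_num]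
    exact inv_anti₀ (by norm_num) (by linarith)
  have hδle : δ ≤ 1 + t := by
    have hi : ρ⁻¹ ≤ ((a:ℝ)+1)⁻¹ := inv_anti₀ (by linarith) (le_of_lt hρ₁)
    simp only [hδdef, htdef]; linarith
  have hlogδle : Real.log δ ≤ Real.log (1+t) := Real.log_le_log hδ0 hδle
  have h2X : L - E ≤ 2*(X:ℝ) * Real.log (1+t) := by
    have hstep : 2*(X:ℝ) * Real.log δ ≤ 2*(X:ℝ) * Real.log (1+t) :=
      mul_le_mul_of_nonneg_left hlogδle (by linarith)
    linarith
  -- numeric part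
  have hlog2pos : 0 < Real.log 2 := Real.log_pos (by norm_num)
  have hLlog2 : Real.log 2 ≤ L := Real.log_le_log (by norm_num) (by linarith)
  have hL0 : 0 ≤ L := by linarith
  have hat : ((a:ℝ)+2) * t = 1 + t := by
    rw [htdef]; field_simp; ring
  have h1 : ((a:ℝ)+2) * Real.log (1+t) ≤ 1 + t/2 := by
    have htay := taylor_log_aux t htpos ht100
    have hlin : t * (((a:ℝ)+2) * Real.log (1+t)) ≤ t * (1 + t/2) := by
      have he : t * (((a:ℝ)+2) * Real.log (1+t)) = (((a:ℝ)+2)*t) * Real.log (1+t) := by ring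
      rw [he, hat]; exact htay
    exact (mul_le_mul_iff_right₀ htpos).mp hlin
  have hmono : 102 * L ≤ ((a:ℝ)+1) * Real.log 102 := log_div_mono_aux _ (by linarith)
  have h4 : L / (2*((a:ℝ)+1)) ≤ Real.log 102 / 204 := by
    rw [div_le_div_iff₀ (by linarith) (by norm_num)]
    linarith [hmono]
  have hlog102 : Real.log 102 ≤ 7 * Real.log 2 := by
    have h128 : Real.log 102 ≤ Real.log 128 := Real.log_le_log (by norm_num) (by norm_num)
    have he : Real.log 128 = 7 * Real.log 2 := by
      rw [show (128:ℝ) = 2^(7:ℕ) by norm_num, Real.log_pow]; push_cast; ring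
    linarith
  have h5 : Real.log 102 / 204 < 3/53 := by
    have hd9 := Real.log_two_lt_d9
    rw [div_lt_div_iff₀ (by norm_num) (by norm_num)]
    linarith [hd9, hlog102]
  have hE' : E ≤ Real.log (100/53) := by
    have hm : Real.log (53/100) ≤ Real.log (1-τ) :=
      Real.log_le_log (by norm_num) (by linarith)
    have hinv : Real.log ((100:ℝ)/53) = - Real.log (53/100) := by
      rw [show (100:ℝ)/53 = ((53:ℝ)/100)⁻¹ by norm_num, Real.log_inv]
    rw [hEdef, hinv]; linarith
  have h6 : (3:ℝ)/53 ≤ Real.log 2 - E := by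
    have hq : Real.log ((53:ℝ)/50) = Real.log 2 - Real.log (100/53) := by
      rw [← Real.log_div (by norm_num) (by norm_num)]
      norm_num
    have hq2 : (3:ℝ)/53 ≤ Real.log ((53:ℝ)/50) := by
      have h := Real.log_le_sub_one_of_pos (show (0:ℝ) < ((53:ℝ)/50)⁻¹ by norm_num)
      rw [Real.log_inv, show ((53:ℝ)/50)⁻¹ = 50/53 by norm_num] at h
      linarith
    linarith
  -- combine
  have hLl2 : 0 ≤ L - Real.log 2 := by linarith
  have hlog1t : 0 < Real.log (1+t) := Real.log_pos (by linarith)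
  have step1 : ((a:ℝ)+2) * (L - Real.log 2) * Real.log (1+t)
      ≤ (L - Real.log 2) + (t/2) * (L - Real.log 2) := by
    have hp := mul_le_mul_of_nonneg_right h1 hLl2
    have hr : (1 + t/2) * (L - Real.log 2)
        = (L - Real.log 2) + (t/2) * (L - Real.log 2) := by ring
    have hr2 : ((a:ℝ)+2) * Real.log (1+t) * (L - Real.log 2)
        = ((a:ℝ)+2) * (L - Real.log 2) * Real.log (1+t) := by ring
    rw [hr, hr2] at hp
    exact hp
  have step2 : (t/2) * (L - Real.log 2) ≤ L / (2*((a:ℝ)+1)) := by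
    have hane : ((a:ℝ)+1) ≠ 0 := ne_of_gt (by linarith)
    have heq : (t/2) * L = L / (2*((a:ℝ)+1)) := by
      rw [htdef, eq_div_iff (by simp [hane] : (2*((a:ℝ)+1)) ≠ 0)]
      field_simp
    have hnn : 0 ≤ (t/2) * Real.log 2 := mul_nonneg (by linarith) hlog2pos.le
    have hr : (t/2) * (L - Real.log 2) = (t/2)*L - (t/2)*Real.log 2 := by ring
    rw [hr, ← heq]
    linarith
  have hfinal : ((a:ℝ)+2) * (L - Real.log 2) * Real.log (1+t) < L - E := by
    have hlt : (t/2) * (L - Real.log 2) < Real.log 2 - E := by linarith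
    linarith
  have h2Xgt : ((a:ℝ)+2) * (L - Real.log 2) < 2*(X:ℝ) := by
    have hlt : ((a:ℝ)+2) * (L - Real.log 2) * Real.log (1+t)
        < (2*(X:ℝ)) * Real.log (1+t) := by linarith
    exact (mul_lt_mul_iff_left₀ hlog1t).mp hlt
  linarith
end
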